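/- arXiv:2006.13705 — 9 statements merged into one kernel-verified Lean document; each statement's English description precedes it below -/
import Mathlib

section
/- An abelian group A is almost divisible if and only if for every sequence (q_n)_{n∈ℕ} of integers there exists m ∈ ℕ such that for every n > m one has (∏_{l<n} q_l)A = (∏_{l<m} q_l)A (where the empty product is 1). -/
/-- For `k : ℤ` and a subgroup `S` of an abelian group `A`, `zmul k S` is the subgroup
`kS = {k • a : a ∈ S}`.  In particular `zmul k ⊤` is the subgroup `kA` of `A`. -/
def zmul {A : Type*} [AddCommGroup A] (k : ℤ) (S : AddSubgroup A) : AddSubgroup A :=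
  S.map (zsmulAddGroupHom k)

/-- `A` is almost divisible: `pA = A` for all but finitely many primes `p`, and for
every prime `p` there exists `n : ℕ` with `p^(n+1)A = p^n A` (i.e. the `p`-length
`l_p(A)` is finite for every prime `p` and zero for almost every prime `p`). -/
def AlmostDivisible (A : Type*) [AddCommGroup A] : Prop :=
  {p : ℕ | p.Prime ∧ zmul (p : ℤ) (⊤ : AddSubgroup A) ≠ ⊤}.Finite ∧
    ∀ p : ℕ, p.Prime →
      ∃ n : ℕ, zmul ((p : ℤ) ^ (n + 1)) (⊤ : AddSubgroup A) = zmul ((p : ℤ) ^ n) ⊤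

section Aux

variable {A : Type*} [AddCommGroup A]

lemma mem_zmul_top {k : ℤ} {x : A} : x ∈ zmul k (⊤ : AddSubgroup A) ↔ ∃ a : A, k • a = x := by
  constructor
  · rintro ⟨a, -, rfl⟩; exact ⟨a, rfl⟩
  · rintro ⟨a, rfl⟩; exact ⟨a, trivial, rfl⟩

lemma zmul_mul (a b : ℤ) (S : AddSubgroup A) : zmul (a * b) S = zmul a (zmul b S) := by
  unfold zmul
  rw [AddSubgroup.map_map]
  congr 1
  ext x
  exact mul_smul a b x

lemma zmul_one_top : zmul (1 : ℤ) (⊤ : AddSubgroup A) = ⊤ := by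
  ext x
  simp only [AddSubgroup.mem_top, iff_true, mem_zmul_top]
  exact ⟨x, one_smul _ _⟩

lemma zmul_dvd_le {a b : ℤ} (h : a ∣ b) : zmul b (⊤ : AddSubgroup A) ≤ zmul a ⊤ := by
  obtain ⟨c, rfl⟩ := h
  rw [zmul_mul]
  exact AddSubgroup.map_mono le_top

lemma zmul_neg (k : ℤ) : zmul (-k) (⊤ : AddSubgroup A) = zmul k ⊤ := by
  ext x
  simp only [mem_zmul_top]
  constructor
  · rintro ⟨a, rfl⟩; exact ⟨-a, by simp⟩
  · rintro ⟨a, rfl⟩; exact ⟨-a, by simp⟩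

lemma zmul_natAbs (k : ℤ) : zmul (k.natAbs : ℤ) (⊤ : AddSubgroup A) = zmul k ⊤ := by
  rcases Int.natAbs_eq k with h | h
  · rw [← h]
  · conv_rhs => rw [h]
    rw [zmul_neg]

lemma zmul_coprime {a b : ℤ} (h : IsCoprime a b) :
    zmul (a * b) (⊤ : AddSubgroup A) = zmul a ⊤ ⊓ zmul b ⊤ := by
  apply le_antisymm
  · exact le_inf (zmul_dvd_le ⟨b, rfl⟩) (zmul_dvd_le ⟨a, mul_comm a b⟩)
  · rintro x ⟨hxa, hxb⟩
    obtain ⟨u, hu⟩ := mem_zmul_top.mp hxa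
    obtain ⟨v, hv⟩ := mem_zmul_top.mp hxb
    obtain ⟨r, s, hrs⟩ := h
    refine mem_zmul_top.mpr ⟨r • v + s • u, ?_⟩
    calc (a * b) • (r • v + s • u)
        = ((a * b) * r) • v + ((a * b) * s) • u := by
          rw [smul_add, smul_smul, smul_smul]
      _ = (r * a) • (b • v) + (s * b) • (a • u) := by
          rw [smul_smul, smul_smul, show r * a * b = a * b * r from by ring,
            show s * b * a = a * b * s from by ring]
      _ = (r * a) • x + (s * b) • x := by rw [hu, hv]
      _ = x := by rw [← add_smul, hrs, one_smul]

lemma zmul_pow_stab {p : ℤ} {n : ℕ}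
    (h : zmul (p ^ (n + 1)) (⊤ : AddSubgroup A) = zmul (p ^ n) ⊤) :
    ∀ e, n ≤ e → zmul (p ^ e) (⊤ : AddSubgroup A) = zmul (p ^ n) ⊤ := by
  intro e he
  induction e, he using Nat.le_induction with
  | base => rfl
  | succ e he ih => rw [pow_succ', zmul_mul, ih, ← zmul_mul, ← pow_succ', h]

lemma zmul_pow_top {p : ℤ} (h : zmul p (⊤ : AddSubgroup A) = ⊤) (e : ℕ) :
    zmul (p ^ e) (⊤ : AddSubgroup A) = ⊤ := by
  induction e with
  | zero => rw [pow_zero]; exact zmul_one_top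
  | succ e ih => rw [pow_succ', zmul_mul, ih, h]

lemma zmul_prod {ι : Type*} (s : Finset ι) (f : ι → ℤ)
    (h : ∀ i ∈ s, ∀ j ∈ s, i ≠ j → IsCoprime (f i) (f j)) :
    zmul (∏ i ∈ s, f i) (⊤ : AddSubgroup A) = s.inf (fun i => zmul (f i) ⊤) := by
  induction s using Finset.cons_induction with
  | empty => simpa using zmul_one_top
  | cons a s ha ih =>
    rw [Finset.prod_cons, Finset.inf_cons]
    have hcop : IsCoprime (f a) (∏ i ∈ s, f i) :=
      IsCoprime.prod_right (fun i hi =>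
        h a (Finset.mem_cons_self a s) i (Finset.mem_cons_of_mem hi)
          (fun hai => ha (hai ▸ hi)))
    rw [zmul_coprime hcop,
      ih (fun i hi j hj hij =>
        h i (Finset.mem_cons_of_mem hi) j (Finset.mem_cons_of_mem hj) hij)]

lemma zmul_nat_factor (k : ℕ) (hk : k ≠ 0) :
    zmul (k : ℤ) (⊤ : AddSubgroup A) =
      k.primeFactors.inf (fun p => zmul ((p : ℤ) ^ (k.factorization p)) ⊤) := by
  have hprod : k = ∏ p ∈ k.primeFactors, p ^ k.factorization p := by
    conv_lhs => rw [← Nat.factorization_prod_pow_eq_self hk]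
    rw [Finsupp.prod, Nat.support_factorization]
  have hcast : (k : ℤ) = ∏ p ∈ k.primeFactors, (p : ℤ) ^ k.factorization p := by
    conv_lhs => rw [hprod]
    push_cast
    rfl
  rw [hcast, zmul_prod]
  intro i hi j hj hij
  exact ((Nat.isCoprime_iff_coprime.mpr
    ((Nat.coprime_primes (Nat.prime_of_mem_primeFactors hi)
      (Nat.prime_of_mem_primeFactors hj)).mpr hij)).pow)

lemma inf_eq_of_subset (s t : Finset ℕ) (F : ℕ → AddSubgroup A) (hts : t ⊆ s)
    (h : ∀ p ∈ s, p ∉ t → F p = ⊤) : s.inf F = t.inf F := by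
  apply le_antisymm (Finset.inf_mono hts)
  apply Finset.le_inf
  intro p hp
  by_cases hpt : p ∈ t
  · exact Finset.inf_le hpt
  · rw [h p hp hpt]; exact le_top

end Aux

/-- An abelian group `A` is almost divisible iff for every sequence `(q_n)` of
integers there exists `m : ℕ` such that for every `n > m` one has
`(∏_{l<n} q_l)A = (∏_{l<m} q_l)A`. -/
theorem stmt1 {A : Type*} [AddCommGroup A] :
    AlmostDivisible A ↔
      ∀ q : ℕ → ℤ, ∃ m : ℕ, ∀ n : ℕ, m < n →
        zmul (∏ l ∈ Finset.range n, q l) (⊤ : AddSubgroup A)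
          = zmul (∏ l ∈ Finset.range m, q l) ⊤ := by
  constructor
  · rintro ⟨hfin, hstep⟩
    -- choose stabilization exponents
    have hstep' : ∀ p : ℕ, ∃ n : ℕ, p.Prime →
        zmul ((p : ℤ) ^ (n + 1)) (⊤ : AddSubgroup A) = zmul ((p : ℤ) ^ n) ⊤ := by
      intro p
      by_cases hp : p.Prime
      · obtain ⟨n, hn⟩ := hstep p hp; exact ⟨n, fun _ => hn⟩
      · exact ⟨0, fun h => absurd h hp⟩
    choose nn hnn using hstep'
    set Pfin : Finset ℕ := hfin.toFinset with hPfin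
    -- representation of zmul k ⊤ for k ≠ 0
    have repr : ∀ k : ℤ, k ≠ 0 → zmul k (⊤ : AddSubgroup A) =
        Pfin.inf (fun p => zmul ((p : ℤ) ^ (min (k.natAbs.factorization p) (nn p))) ⊤) := by
      intro k hk
      have hj0 : k.natAbs ≠ 0 := Int.natAbs_ne_zero.mpr hk
      set j := k.natAbs with hj
      set F : ℕ → AddSubgroup A :=
        fun p => zmul ((p : ℤ) ^ (min (j.factorization p) (nn p))) ⊤ with hF
      rw [← zmul_natAbs k, zmul_nat_factor j hj0]
      have hGF : ∀ p ∈ j.primeFactors,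
          zmul ((p : ℤ) ^ (j.factorization p)) (⊤ : AddSubgroup A) = F p := by
        intro p hp
        have hpp := Nat.prime_of_mem_primeFactors hp
        by_cases hbad : p ∈ Pfin
        · rcases le_or_gt (j.factorization p) (nn p) with hle | hlt
          · rw [hF]; simp only [min_eq_left hle]
          · rw [hF]; simp only [min_eq_right hlt.le]
            exact zmul_pow_stab (hnn p hpp) _ hlt.le
        · have htop : zmul (p : ℤ) (⊤ : AddSubgroup A) = ⊤ := by
            by_contra hne
            exact hbad (hfin.mem_toFinset.mpr ⟨hpp, hne⟩)
          rw [hF]; simp only [zmul_pow_top htop]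
      rw [Finset.inf_congr rfl hGF]
      have h1 : (j.primeFactors ∪ Pfin).inf F = j.primeFactors.inf F := by
        apply inf_eq_of_subset _ _ F Finset.subset_union_left
        intro p hp hpn
        have h0 : j.factorization p = 0 := by
          by_contra h0
          exact hpn (Nat.support_factorization j ▸ Finsupp.mem_support_iff.mpr h0)
        rw [hF]
        simp only [h0, Nat.zero_min, pow_zero]
        exact zmul_one_top
      have h2 : (j.primeFactors ∪ Pfin).inf F = Pfin.inf F := by
        apply inf_eq_of_subset _ _ F Finset.subset_union_right
        intro p hp hpn
        have hpf : p ∈ j.primeFactors := by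
          rcases Finset.mem_union.mp hp with h | h
          · exact h
          · exact absurd h hpn
        have hpp := Nat.prime_of_mem_primeFactors hpf
        have htop : zmul (p : ℤ) (⊤ : AddSubgroup A) = ⊤ := by
          by_contra hne
          exact hpn (hfin.mem_toFinset.mpr ⟨hpp, hne⟩)
        rw [hF]; simp only [zmul_pow_top htop]
      rw [← h1, h2]
    -- finiteness of the set of values zmul k ⊤ for k ≠ 0
    set N : ℕ := Pfin.sup nn with hN
    have hsetfin : {S : AddSubgroup A | ∃ k : ℤ, k ≠ 0 ∧ S = zmul k ⊤}.Finite := by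
      apply Set.Finite.subset (Set.finite_range
        (fun e : (↑Pfin → Fin (N + 1)) => Pfin.inf
          (fun p => if h : p ∈ Pfin then
            zmul ((p : ℤ) ^ ((e ⟨p, h⟩ : Fin (N + 1)) : ℕ)) (⊤ : AddSubgroup A) else ⊤)))
      rintro S ⟨k, hk, rfl⟩
      refine ⟨fun p => ⟨min (k.natAbs.factorization (p : ℕ)) (nn p),
        Nat.lt_succ_of_le (le_trans (min_le_right _ _) (Finset.le_sup p.2))⟩, ?_⟩
      simp only
      rw [repr k hk]
      apply Finset.inf_congr rfl
      intro p hp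
      rw [dif_pos hp]
    -- stabilization
    intro q
    by_cases hz : ∃ l, q l = 0
    · obtain ⟨l, hl⟩ := hz
      refine ⟨l + 1, fun n hn => ?_⟩
      rw [Finset.prod_eq_zero (Finset.mem_range.mpr (lt_trans (Nat.lt_succ_self l) hn)) hl,
        Finset.prod_eq_zero (Finset.mem_range.mpr (Nat.lt_succ_self l)) hl]
    · push_neg at hz
      have hanti : Antitone (fun n => zmul (∏ l ∈ Finset.range n, q l) (⊤ : AddSubgroup A)) := by
        apply antitone_nat_of_succ_le
        intro n
        rw [Finset.prod_range_succ, zmul_mul]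
        exact AddSubgroup.map_mono le_top
      have hrange : (Set.range
          (fun n => zmul (∏ l ∈ Finset.range n, q l) (⊤ : AddSubgroup A))).Finite := by
        apply hsetfin.subset
        rintro S ⟨n, rfl⟩
        exact ⟨∏ l ∈ Finset.range n, q l,
          Finset.prod_ne_zero_iff.mpr (fun i _ => hz i), rfl⟩
      obtain ⟨S, ⟨m, hm⟩, hmin⟩ :=
        (by
          obtain ⟨S, hS, hS'⟩ := Set.Finite.exists_minimalFor id _ hrange ⟨_, 0, rfl⟩
          exact ⟨S, hS, fun S' h1 h2 => le_antisymm (hS' h1 h2) h2⟩ :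
          ∃ S ∈ Set.range (fun n => zmul (∏ l ∈ Finset.range n, q l) (⊤ : AddSubgroup A)),
            ∀ S' ∈ Set.range (fun n => zmul (∏ l ∈ Finset.range n, q l) (⊤ : AddSubgroup A)),
              S' ≤ S → S = S')
      refine ⟨m, fun n hn => ?_⟩
      have hle : zmul (∏ l ∈ Finset.range n, q l) (⊤ : AddSubgroup A) ≤ S :=
        hm ▸ hanti hn.le
      have := hmin (zmul (∏ l ∈ Finset.range n, q l) ⊤) ⟨n, rfl⟩ hle
      exact (hm.trans this).symm
  · intro H
    constructor
    · by_contra hinf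
      have hinf' : {p : ℕ | p.Prime ∧ zmul (p : ℤ) (⊤ : AddSubgroup A) ≠ ⊤}.Infinite := hinf
      set e := hinf'.natEmbedding with he
      set q : ℕ → ℤ := fun i => ((e i : ℕ) : ℤ) with hq
      obtain ⟨m, hm⟩ := H q
      have h1 := hm (m + 1) (Nat.lt_succ_self m)
      rw [Finset.prod_range_succ] at h1
      set P : ℤ := ∏ l ∈ Finset.range m, q l with hP
      have hcop : IsCoprime P (q m) := by
        apply IsCoprime.prod_left
        intro i hi
        have hne : (e i : ℕ) ≠ (e m : ℕ) := by
          intro hcon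
          have : i = m := e.injective (Subtype.ext hcon)
          exact absurd this (Nat.ne_of_lt (Finset.mem_range.mp hi))
        exact Nat.isCoprime_iff_coprime.mpr
          ((Nat.coprime_primes (e i).2.1 (e m).2.1).mpr hne)
      have hZ : zmul (q m) (⊤ : AddSubgroup A) = ⊤ := by
        rw [zmul_coprime hcop] at h1
        have hle : zmul P (⊤ : AddSubgroup A) ≤ zmul (q m) ⊤ := by
          rw [← h1]; exact inf_le_right
        obtain ⟨r, s, hrs⟩ := hcop
        ext x
        simp only [AddSubgroup.mem_top, iff_true]
        obtain ⟨v, hv⟩ := mem_zmul_top.mp (hle (mem_zmul_top.mpr ⟨x, rfl⟩))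
        refine mem_zmul_top.mpr ⟨r • v + s • x, ?_⟩
        calc (q m) • (r • v + s • x)
            = r • ((q m) • v) + (s * q m) • x := by
              rw [smul_add, smul_smul, smul_smul, smul_smul, mul_comm (q m) r, mul_comm (q m) s]
          _ = (r * P + s * q m) • x := by rw [hv, smul_smul, add_smul]
          _ = x := by rw [hrs, one_smul]
      exact (e m).2.2 hZ
    · intro p hp
      obtain ⟨m, hm⟩ := H (fun _ => (p : ℤ))
      refine ⟨m + 1, ?_⟩
      have e1 := hm (m + 1) (Nat.lt_succ_self m)
      have e2 := hm (m + 2) (by omega)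
      rw [Finset.prod_const, Finset.prod_const, Finset.card_range, Finset.card_range] at e1 e2
      show zmul ((p : ℤ) ^ (m + 2)) (⊤ : AddSubgroup A) = zmul ((p : ℤ) ^ (m + 1)) ⊤
      rw [e2, e1]
end

section
/- An abelian group A is almost divisible and reduced if and only if A is bounded. -/
/-- A subgroup `S` of `A` is divisible if `nS = S` for every `n ≥ 1`. -/
def DivisibleSubgroup {A : Type*} [AddCommGroup A] (S : AddSubgroup A) : Prop :=
  ∀ n : ℤ, 1 ≤ n → zmul n S = S

/-- `A` is reduced: its only divisible subgroup is the trivial subgroup. -/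
def Reduced (A : Type*) [AddCommGroup A] : Prop :=
  ∀ S : AddSubgroup A, DivisibleSubgroup S → S = ⊥

/-- `A` is bounded: `mA = 0` for some `m ≥ 1`. -/
def BoundedGroup (A : Type*) [AddCommGroup A] : Prop :=
  ∃ m : ℤ, 1 ≤ m ∧ zmul m (⊤ : AddSubgroup A) = ⊥

section aux

variable {A : Type*} [AddCommGroup A]

lemma mem_zmul {k : ℤ} {S : AddSubgroup A} {x : A} :
    x ∈ zmul k S ↔ ∃ y ∈ S, k • y = x := by
  simp [zmul, AddSubgroup.mem_map, zsmulAddGroupHom]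

lemma zmul_zmul (a b : ℤ) (S : AddSubgroup A) : zmul a (zmul b S) = zmul (a * b) S := by
  ext x
  simp only [mem_zmul]
  constructor
  · rintro ⟨y, ⟨z, hz, rfl⟩, rfl⟩
    exact ⟨z, hz, mul_smul a b z⟩
  · rintro ⟨z, hz, rfl⟩
    exact ⟨b • z, ⟨z, hz, rfl⟩, (mul_smul a b z).symm⟩

lemma zmul_one (S : AddSubgroup A) : zmul 1 S = S := by
  ext x; simp [mem_zmul]

lemma zmul_le (k : ℤ) (S : AddSubgroup A) : zmul k S ≤ S := by
  rintro x hx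
  rw [mem_zmul] at hx
  obtain ⟨y, hy, rfl⟩ := hx
  exact S.zsmul_mem hy k

lemma zmul_mono (k : ℤ) {S T : AddSubgroup A} (h : S ≤ T) : zmul k S ≤ zmul k T :=
  AddSubgroup.map_mono h

lemma zmul_eq_of_coprime {S : AddSubgroup A} {q m : ℤ}
    (h : IsCoprime q m) (hm : ∀ x ∈ S, m • x = 0) : zmul q S = S := by
  refine le_antisymm (zmul_le q S) ?_
  intro x hx
  obtain ⟨u, v, huv⟩ := h
  rw [mem_zmul]
  refine ⟨u • x, S.zsmul_mem hx u, ?_⟩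
  calc q • u • x = (u * q) • x := by rw [← mul_smul, mul_comm]
    _ = (u * q) • x + v • (m • x) := by rw [hm x hx, smul_zero, add_zero]
    _ = (u * q + v * m) • x := by rw [← mul_smul, ← add_smul]
    _ = x := by rw [huv, one_smul]

end aux

/-- An abelian group `A` is almost divisible and reduced iff `A` is bounded. -/
theorem stmt2 {A : Type*} [AddCommGroup A] :
    (AlmostDivisible A ∧ Reduced A) ↔ BoundedGroup A := by
  constructor
  · rintro ⟨⟨hfin, hstab⟩, hred⟩
    classical
    set F : Finset ℕ := hfin.toFinset with hF
    have hmemF : ∀ p, p ∈ F ↔ p.Prime ∧ zmul (p : ℤ) (⊤ : AddSubgroup A) ≠ ⊤ := by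
      intro p; simp [hF, Set.Finite.mem_toFinset]
    -- choose stabilization exponents
    let n : ℕ → ℕ := fun p => if h : p.Prime then (hstab p h).choose else 0
    have hn : ∀ p : ℕ, p.Prime →
        zmul ((p : ℤ) ^ (n p + 1)) (⊤ : AddSubgroup A) = zmul ((p : ℤ) ^ (n p)) ⊤ := by
      intro p hp
      simp only [n, dif_pos hp]
      exact (hstab p hp).choose_spec
    set m : ℕ := ∏ p ∈ F, p ^ (n p) with hm
    have hmpos : 0 < m := by
      apply Finset.prod_pos
      intro p hp
      exact pow_pos ((hmemF p).1 hp).1.pos _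
    set T : AddSubgroup A := zmul (m : ℤ) ⊤ with hT
    -- prime case: q T = T for every prime q
    have hprime : ∀ q : ℕ, q.Prime → zmul (q : ℤ) T = T := by
      intro q hq
      by_cases hqF : q ∈ F
      · -- q ∈ F : use stabilization
        have hsplit : m = q ^ (n q) * ∏ p ∈ F.erase q, p ^ (n p) := by
          rw [hm, ← Finset.mul_prod_erase F _ hqF]
        set m'' : ℕ := ∏ p ∈ F.erase q, p ^ (n p) with hm''
        have key : zmul ((q : ℤ) * m) ⊤ = (zmul (m : ℤ) ⊤ : AddSubgroup A) := by
          have h1 : (q : ℤ) * m = (m'' : ℤ) * (q : ℤ) ^ (n q + 1) := by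
            rw [hsplit]; push_cast; ring
          have h2 : (m : ℤ) = (m'' : ℤ) * (q : ℤ) ^ (n q) := by
            rw [hsplit]; push_cast; ring
          rw [h1, h2, ← zmul_zmul, ← zmul_zmul, hn q hq]
        rw [hT, zmul_zmul, key]
      · -- q ∉ F : q A = A
        have hqtop : zmul (q : ℤ) (⊤ : AddSubgroup A) = ⊤ := by
          by_contra h
          exact hqF ((hmemF q).2 ⟨hq, h⟩)
        rw [hT, zmul_zmul, mul_comm, ← zmul_zmul, hqtop]
    -- all naturals ≥ 1
    have hnat : ∀ k : ℕ, 1 ≤ k → zmul (k : ℤ) T = T := by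
      intro k
      induction k using Nat.strong_induction_on with
      | _ k ih =>
        intro hk
        rcases eq_or_lt_of_le hk with h1 | h2
        · rw [← h1]; exact zmul_one T
        · obtain ⟨q, hq, hqd⟩ := Nat.exists_prime_and_dvd (by omega : k ≠ 1)
          obtain ⟨c, rfl⟩ := hqd
          have hc1 : 1 ≤ c :=
            Nat.pos_of_ne_zero (fun hc => by simp [hc] at h2)
          have hck : c < q * c := by
            have := hq.two_le
            nlinarith
          have : ((q : ℤ)) * c = ((q * c : ℕ) : ℤ) := by push_cast; ring
          rw [← this, ← zmul_zmul, ih c hck hc1, hprime q hq]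
    have hdiv : DivisibleSubgroup T := by
      intro k hk
      have : ((k.toNat : ℕ) : ℤ) = k := Int.toNat_of_nonneg (by omega)
      rw [← this]
      exact hnat k.toNat (by omega)
    have hbot : T = ⊥ := hred T hdiv
    exact ⟨(m : ℤ), by exact_mod_cast hmpos, hbot⟩
  · rintro ⟨m, hm1, hbot⟩
    have hma : ∀ a : A, m • a = 0 := by
      intro a
      have : m • a ∈ zmul m (⊤ : AddSubgroup A) := mem_zmul.2 ⟨a, trivial, rfl⟩
      rw [hbot] at this
      simpa using this
    set M : ℕ := m.toNat with hM
    have hMm : (M : ℤ) = m := Int.toNat_of_nonneg (by omega)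
    have hMpos : M ≠ 0 := by omega
    refine ⟨⟨?_, ?_⟩, ?_⟩
    · -- finiteness of bad primes
      apply Set.Finite.subset (Set.finite_Iic M)
      rintro p ⟨hp, hne⟩
      rw [Set.mem_Iic]
      by_contra hle
      -- p does not divide M, so coprime to m
      have hnd : ¬ (p ∣ M) := fun h => hle (Nat.le_of_dvd (Nat.pos_of_ne_zero hMpos) h)
      have hcop : IsCoprime (p : ℤ) m := by
        rw [← hMm]
        exact Nat.isCoprime_iff_coprime.2 (hp.coprime_iff_not_dvd.2 hnd)
      exact hne (zmul_eq_of_coprime hcop (fun x _ => hma x))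
    · -- stabilization at valuation
      intro p hp
      set np : ℕ := M.factorization p with hnp
      refine ⟨np, ?_⟩
      set M' : ℕ := M / p ^ np with hM'
      have hsplit : p ^ np * M' = M := Nat.ordProj_mul_ordCompl_eq_self M p
      have hnd : ¬ (p ∣ M') := Nat.not_dvd_ordCompl hp hMpos
      have hcop : IsCoprime (p : ℤ) (M' : ℤ) :=
        Nat.isCoprime_iff_coprime.2 (hp.coprime_iff_not_dvd.2 hnd)
      have hann : ∀ x ∈ zmul ((p : ℤ) ^ np) (⊤ : AddSubgroup A), (M' : ℤ) • x = 0 := by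
        rintro x hx
        rw [mem_zmul] at hx
        obtain ⟨y, -, rfl⟩ := hx
        have : (M' : ℤ) • (p : ℤ) ^ np • y = m • y := by
          rw [← mul_smul, ← hMm, ← hsplit]
          push_cast; ring_nf
        rw [this, hma]
      have : ((p : ℤ)) ^ (np + 1) = (p : ℤ) * (p : ℤ) ^ np := by ring
      rw [this, ← zmul_zmul]
      exact zmul_eq_of_coprime hcop hann
    · -- reduced
      intro S hS
      have hle : S ≤ ⊥ := calc
        S = zmul m S := (hS m hm1).symm
        _ ≤ zmul m ⊤ := zmul_mono m le_top
        _ = ⊥ := hbot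
      exact le_bot_iff.mp hle
end

section
/- Let A be an abelian group, 𝒟 a small category and X : 𝒟 → Set_* a diagram of pointed sets. If A is uniquely divisible (for every a ∈ A and n ≥ 1 there is a unique b ∈ A with nb = a), then the kernel and cokernel of the natural map ρ : (lim_𝒟 X)∧A → lim_𝒟(X∧A) are uniquely divisible. -/
open CategoryTheory Finsupp

universe u v w

/-- The smash product `Y ∧ A` of a pointed set `(Y, y0)` with an abelian group `A`:
the group of finitely supported functions `Y →₀ A` vanishing at the basepoint,
i.e. `⊕_{y ∈ Y∖{y0}} A`. -/
def Smash (Y : Type u) (y0 : Y) (A : Type v) [AddCommGroup A] :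
    AddSubgroup (Y →₀ A) where
  carrier := {f | f y0 = 0}
  add_mem' := by
    intro a b ha hb
    simp only [Set.mem_setOf_eq, Finsupp.add_apply] at *
    rw [ha, hb, add_zero]
  zero_mem' := by simp
  neg_mem' := by
    intro a ha
    simp only [Set.mem_setOf_eq, Finsupp.neg_apply] at *
    rw [ha, neg_zero]

theorem mem_smash {Y : Type u} {y0 : Y} {A : Type v} [AddCommGroup A] {f : Y →₀ A} :
    f ∈ Smash Y y0 A ↔ f y0 = 0 := Iff.rfl

/-- The pushforward homomorphism `g_* : Y∧A → Z∧A` induced by a (pointed) map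
`g : Y → Z`: `(g_* f)(z) = ∑_{y : g y = z} f y` for `z ≠ z0`, and `(g_* f)(z0) = 0`. -/
noncomputable def smashMap {Y : Type u} {Z : Type v} (y0 : Y) (z0 : Z) (g : Y → Z)
    (A : Type w) [AddCommGroup A] :
    Smash Y y0 A →+ Smash Z z0 A where
  toFun f := ⟨(Finsupp.mapDomain g f.1).erase z0, Finsupp.erase_same⟩
  map_zero' := by
    apply Subtype.ext
    simp
  map_add' f₁ f₂ := by
    apply Subtype.ext
    show (Finsupp.mapDomain g ((f₁ : Y →₀ A) + (f₂ : Y →₀ A))).erase z0 = _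
    rw [Finsupp.mapDomain_add, Finsupp.erase_add]
    rfl

theorem smashMap_comp {Y : Type u} {Z : Type v} {W : Type w} (y0 : Y) (z0 : Z) (w0 : W)
    (g : Y → Z) (g' : Z → W) (hg' : g' z0 = w0)
    (A : Type*) [AddCommGroup A] (f : Smash Y y0 A) :
    smashMap z0 w0 g' A (smashMap y0 z0 g A f) = smashMap y0 w0 (g' ∘ g) A f := by
  classical
  apply Subtype.ext
  show (Finsupp.mapDomain g' ((Finsupp.mapDomain g f.1).erase z0)).erase w0
      = (Finsupp.mapDomain (g' ∘ g) f.1).erase w0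
  rw [Finsupp.mapDomain_comp]
  set h := Finsupp.mapDomain g f.1 with hh
  have key : Finsupp.mapDomain g' (h.erase z0)
      = Finsupp.mapDomain g' h - Finsupp.single w0 (h z0) := by
    have h1 : h.erase z0 = h - Finsupp.single z0 (h z0) := by
      ext a
      by_cases ha : a = z0
      · subst ha; simp
      · simp [Finsupp.erase_ne ha, Finsupp.single_apply, Ne.symm ha, ha]
    rw [h1]
    have h2 := map_sub (Finsupp.mapDomain.addMonoidHom g') h (Finsupp.single z0 (h z0))
    simp only [Finsupp.mapDomain.addMonoidHom_apply] at h2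
    rw [h2, Finsupp.mapDomain_single, hg']
  rw [key]
  ext a
  by_cases ha : a = w0
  · subst ha; simp
  · simp [Finsupp.erase_ne ha, Finsupp.single_apply, Ne.symm ha, ha]
/-- The inverse limit of a diagram of pointed sets, as a subset of the product. -/
def plim {D : Type u} [Category.{v} D] (F : D ⥤ Pointed.{w}) :
    Set (∀ d : D, (F.obj d).X) :=
  {x | ∀ ⦃d d' : D⦄ (u : d ⟶ d'), (F.map u).toFun (x d) = x d'}

/-- The basepoint of the inverse limit of a diagram of pointed sets. -/
def plimPt {D : Type u} [Category.{v} D] (F : D ⥤ Pointed.{w}) : plim F :=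
  ⟨fun d => (F.obj d).point, fun _ _ u => (F.map u).map_point⟩

/-- The inverse limit `lim_D (X ∧ A)` of the diagram of abelian groups obtained by
smashing a diagram of pointed sets with an abelian group `A`. -/
noncomputable def glim {D : Type u} [Category.{v} D] (F : D ⥤ Pointed.{w})
    (A : Type*) [AddCommGroup A] :
    AddSubgroup (∀ d : D, Smash (F.obj d).X (F.obj d).point A) where
  carrier := {h | ∀ ⦃d d' : D⦄ (u : d ⟶ d'),
      smashMap (F.obj d).point (F.obj d').point (F.map u).toFun A (h d) = h d'}
  add_mem' := by
    intro a b ha hb d d' u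
    rw [Pi.add_apply, map_add, ha u, hb u]
    rfl
  zero_mem' := by
    intro d d' u
    rw [Pi.zero_apply, map_zero]
    rfl
  neg_mem' := by
    intro a ha d d' u
    rw [Pi.neg_apply, map_neg, ha u]
    rfl

/-- The natural map `ρ : (lim_D X) ∧ A → lim_D (X ∧ A)`, whose component at `d`
is induced by the projection `lim_D X → X d`. -/
noncomputable def rho {D : Type u} [Category.{v} D] (F : D ⥤ Pointed.{w})
    (A : Type*) [AddCommGroup A] :
    Smash (plim F) (plimPt F) A →+ glim F A where
  toFun f := ⟨fun d => smashMap (plimPt F) (F.obj d).point (fun x => x.1 d) A f, by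
    intro d d' u
    rw [smashMap_comp (plimPt F) (F.obj d).point (F.obj d').point _ _ (F.map u).map_point A f]
    have : ((F.map u).toFun ∘ fun x : plim F => x.1 d) = fun x : plim F => x.1 d' := by
      funext x
      exact x.2 u
    rw [this]⟩
  map_zero' := by
    apply Subtype.ext
    funext d
    show smashMap (plimPt F) (F.obj d).point (fun x => x.1 d) A 0 = (0 : Smash _ _ A)
    exact map_zero _
  map_add' f₁ f₂ := by
    apply Subtype.ext
    funext d
    show smashMap (plimPt F) (F.obj d).point (fun x => x.1 d) A (f₁ + f₂)
        = smashMap (plimPt F) (F.obj d).point (fun x => x.1 d) A f₁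
          + smashMap (plimPt F) (F.obj d).point (fun x => x.1 d) A f₂
    exact map_add _ f₁ f₂
/-- A group `G` is uniquely divisible if for every `a : G` and `n ≥ 1` there is a
unique `b : G` with `n • b = a`. -/
def UniquelyDivisible (G : Type*) [AddCommGroup G] : Prop :=
  ∀ (a : G) (n : ℕ), 1 ≤ n → ∃! b : G, n • b = a

lemma ud_inj {G : Type*} [AddCommGroup G] (hG : UniquelyDivisible G) {n : ℕ} (hn : 1 ≤ n)
    {b c : G} (h : n • b = n • c) : b = c := by
  obtain ⟨x, -, hx⟩ := hG (n • c) n hn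
  exact (hx b h).trans (hx c rfl).symm

lemma smash_inj {Y : Type u} {y0 : Y} {A : Type v} [AddCommGroup A]
    (hA : UniquelyDivisible A) {n : ℕ} (hn : 1 ≤ n)
    {b c : Smash Y y0 A} (h : n • b = n • c) : b = c := by
  apply Subtype.ext
  ext y
  apply ud_inj hA hn
  have := congrArg (fun f : Smash Y y0 A => (f.1 : Y →₀ A) y) h
  simpa using this

lemma ud_smash {Y : Type u} (y0 : Y) {A : Type v} [AddCommGroup A]
    (hA : UniquelyDivisible A) : UniquelyDivisible (Smash Y y0 A) := by
  intro a n hn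
  choose d hd using fun x : A => (hA x n hn).exists
  have hd0 : d 0 = 0 := ud_inj hA hn (by rw [hd 0, smul_zero])
  refine ⟨⟨Finsupp.mapRange d hd0 a.1, by
      rw [mem_smash, Finsupp.mapRange_apply, a.2, hd0]⟩, ?_, ?_⟩
  · apply Subtype.ext
    ext y
    simp [hd]
  · intro c hc
    exact smash_inj hA hn (hc.trans (Subtype.ext (by ext y; simp [hd])).symm)

lemma glim_inj {D : Type u} [Category.{v} D] (F : D ⥤ Pointed.{w})
    {A : Type*} [AddCommGroup A] (hA : UniquelyDivisible A) {n : ℕ} (hn : 1 ≤ n)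
    {b c : glim F A} (h : n • b = n • c) : b = c := by
  apply Subtype.ext
  funext d
  apply smash_inj hA hn
  have := congrArg (fun f : glim F A => (f.1 : ∀ d, Smash (F.obj d).X (F.obj d).point A) d) h
  simpa using this

lemma ud_glim {D : Type u} [Category.{v} D] (F : D ⥤ Pointed.{w})
    {A : Type*} [AddCommGroup A] (hA : UniquelyDivisible A) :
    UniquelyDivisible (glim F A) := by
  intro a n hn
  choose b hb using fun d : D => (ud_smash (F.obj d).point hA (a.1 d) n hn).exists
  have hbmem : b ∈ glim F A := by
    intro d d' u
    apply smash_inj hA hn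
    rw [← map_nsmul, hb d, a.2 u, hb d']
  refine ⟨⟨b, hbmem⟩, ?_, fun c hc => glim_inj F hA hn (hc.trans ?_)⟩
  · apply Subtype.ext
    funext d
    exact hb d
  · apply Subtype.ext
    funext d
    exact (hb d).symm

/-- Let `A` be an abelian group, `D` a small category and `F : D ⥤ Set_*` a diagram of
pointed sets.  If `A` is uniquely divisible, then the kernel and the cokernel of the
natural map `ρ : (lim_D F) ∧ A → lim_D (F ∧ A)` are uniquely divisible. -/
theorem stmt5 {D : Type u} [Category.{v} D] (F : D ⥤ Pointed.{w})
    {A : Type*} [AddCommGroup A] (hA : UniquelyDivisible A) :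
    UniquelyDivisible (rho F A).ker ∧
      UniquelyDivisible (↥(glim F A) ⧸ (rho F A).range) := by
  constructor
  · -- kernel
    intro a n hn
    obtain ⟨b, hb⟩ := (ud_smash (plimPt F) hA a.1 n hn).exists
    have hbker : b ∈ (rho F A).ker := by
      rw [AddMonoidHom.mem_ker]
      apply glim_inj F hA hn
      rw [← map_nsmul, hb, AddMonoidHom.mem_ker.mp a.2, smul_zero]
    refine ⟨⟨b, hbker⟩, Subtype.ext hb, fun c hc => ?_⟩
    apply Subtype.ext
    apply smash_inj hA hn
    have : n • c.1 = a.1 := congrArg Subtype.val hc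
    rw [this, ← hb]
  · -- cokernel
    intro a n hn
    obtain ⟨x, rfl⟩ := QuotientAddGroup.mk_surjective a
    obtain ⟨b, hb⟩ := (ud_glim F hA x n hn).exists
    refine ⟨QuotientAddGroup.mk b, ?_, fun c hc => ?_⟩
    · show QuotientAddGroup.mk (n • b) = _
      rw [hb]
    · obtain ⟨h, rfl⟩ := QuotientAddGroup.mk_surjective c
      have key : QuotientAddGroup.mk (s := (rho F A).range) (n • h) =
          QuotientAddGroup.mk (n • b) := by
        rw [hb]; exact hc
      rw [QuotientAddGroup.eq_iff_sub_mem] at key ⊢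
      obtain ⟨f, hf⟩ := key
      obtain ⟨g, hg⟩ := (ud_smash (plimPt F) hA f n hn).exists
      refine ⟨g, glim_inj F hA hn ?_⟩
      rw [← map_nsmul, hg, hf, smul_sub]
end

section
/- Let A be an abelian group, 𝒟 a small category and X : 𝒟 → Set_* a diagram of pointed sets. If A is almost uniquely divisible (A = Q ⊕ B for subgroups Q, B with Q uniquely divisible and B bounded), then the kernel and cokernel of the natural map ρ : (lim_𝒟 X)∧A → lim_𝒟(X∧A) are almost uniquely divisible. -/
open CategoryTheory Finsupp

universe u v w

/-- A group `G` is almost uniquely divisible if it is the (internal) direct sum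
`G = Q ⊕ B` of a uniquely divisible subgroup `Q` and a bounded subgroup `B`. -/
def AlmostUniquelyDivisible (G : Type*) [AddCommGroup G] : Prop :=
  ∃ Q B : AddSubgroup G, IsCompl Q B ∧ UniquelyDivisible Q ∧
    ∃ m : ℕ, 1 ≤ m ∧ ∀ b ∈ B, m • b = 0

/-! ### Auxiliary lemmas -/

section Aux

/-- A sufficient criterion for almost unique divisibility in terms of an
idempotent endomorphism. -/
theorem aud_of_idem {G : Type*} [AddCommGroup G] (e : G →+ G)
    (hidem : ∀ g, e (e g) = e g)
    (hdiv : ∀ g, e g = g → ∀ n : ℕ, 1 ≤ n → ∃ g', e g' = g' ∧ n • g' = g)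
    (htf : ∀ g, e g = g → ∀ n : ℕ, 1 ≤ n → n • g = 0 → g = 0)
    (m : ℕ) (hm : 1 ≤ m) (hbd : ∀ g, e g = 0 → m • g = 0) :
    AlmostUniquelyDivisible G := by
  refine ⟨{ carrier := {g | e g = g}
            add_mem' := by intro a b ha hb; simp only [Set.mem_setOf_eq] at *
                           rw [map_add, ha, hb]
            zero_mem' := by simp
            neg_mem' := by intro a ha; simp only [Set.mem_setOf_eq] at *
                           rw [map_neg, ha] },
          { carrier := {g | e g = 0}
            add_mem' := by intro a b ha hb; simp only [Set.mem_setOf_eq] at *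
                           rw [map_add, ha, hb, add_zero]
            zero_mem' := by simp
            neg_mem' := by intro a ha; simp only [Set.mem_setOf_eq] at *
                           rw [map_neg, ha, neg_zero] },
          ?_, ?_, m, hm, ?_⟩
  · constructor
    · rw [_root_.disjoint_iff, eq_bot_iff]
      intro g hg
      rcases hg with ⟨h1, h2⟩
      have : g = 0 := by rw [← h1]; exact h2
      simpa [AddSubgroup.mem_bot] using this
    · rw [codisjoint_iff, eq_top_iff]
      intro g _
      have h1 : e g ∈ ({g | e g = g} : Set G) := hidem g
      have h2 : g - e g ∈ ({g | e g = 0} : Set G) := by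
        simp only [Set.mem_setOf_eq, map_sub, hidem, sub_self]
      have : g = e g + (g - e g) := by abel
      rw [this]
      exact AddSubgroup.add_mem_sup h1 h2
  · intro a n hn
    obtain ⟨g', hg', hng'⟩ := hdiv a.1 a.2 n hn
    refine ⟨⟨g', hg'⟩, Subtype.ext (by simpa), ?_⟩
    intro y hy
    have h0 : n • (y.1 - g') = 0 := by
      have : n • (y : G) = a := by
        have := congrArg (Subtype.val) hy
        simpa using this
      rw [smul_sub, this, hng', sub_self]
    have hfix : e (y.1 - g') = y.1 - g' := by 
      rw [map_sub, y.2, hg']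
    have := htf _ hfix n hn h0
    apply Subtype.ext
    have hyg : (y : G) = g' := sub_eq_zero.mp this
    simpa using hyg
  · intro b hb
    exact hbd b hb


/-- Pointwise application of an endomorphism `φ : A →+ A` to elements of `Y ∧ A`. -/
noncomputable def smashRange {Y : Type u} (y0 : Y) {A : Type v} [AddCommGroup A]
    (φ : A →+ A) : Smash Y y0 A →+ Smash Y y0 A where
  toFun f := ⟨Finsupp.mapRange φ φ.map_zero f.1, by
    show Finsupp.mapRange φ φ.map_zero f.1 y0 = 0
    rw [Finsupp.mapRange_apply, f.2, φ.map_zero]⟩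
  map_zero' := Subtype.ext (by ext y; simp)
  map_add' f g := Subtype.ext (by
    ext y
    show Finsupp.mapRange φ φ.map_zero ((f : Y →₀ A) + (g : Y →₀ A)) y = _
    simp)

theorem smashRange_apply {Y : Type u} (y0 : Y) {A : Type v} [AddCommGroup A]
    (φ : A →+ A) (f : Smash Y y0 A) (y : Y) :
    ((smashRange y0 φ f : Smash Y y0 A) : Y →₀ A) y = φ ((f : Y →₀ A) y) := by
  show Finsupp.mapRange φ φ.map_zero f.1 y = _
  rw [Finsupp.mapRange_apply]

theorem smashMap_smashRange {Y : Type u} {Z : Type v} (y0 : Y) (z0 : Z) (g : Y → Z)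
    {A : Type w} [AddCommGroup A] (φ : A →+ A) (f : Smash Y y0 A) :
    smashMap y0 z0 g A (smashRange y0 φ f) = smashRange z0 φ (smashMap y0 z0 g A f) := by
  apply Subtype.ext
  show (Finsupp.mapDomain g (Finsupp.mapRange φ φ.map_zero f.1)).erase z0
      = Finsupp.mapRange φ φ.map_zero ((Finsupp.mapDomain g f.1).erase z0)
  rw [Finsupp.mapDomain_mapRange _ _ _ _ φ.map_add]
  ext z
  by_cases hz : z = z0
  · subst hz; simp
  · simp [Finsupp.erase_ne hz, Finsupp.mapRange_apply]

theorem smashRange_fixed_iff {Y : Type u} (y0 : Y) {A : Type v} [AddCommGroup A]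
    {Q : AddSubgroup A} {φ : A →+ A} (hmem : ∀ a, φ a ∈ Q) (hfix : ∀ a ∈ Q, φ a = a)
    (f : Smash Y y0 A) :
    smashRange y0 φ f = f ↔ ∀ y, (f : Y →₀ A) y ∈ Q := by
  rw [Subtype.ext_iff, Finsupp.ext_iff]
  constructor
  · intro h y
    have := h y
    rw [smashRange_apply] at this
    rw [← this]
    exact hmem _
  · intro h y
    rw [smashRange_apply]
    exact hfix _ (h y)

theorem smash_tf {Y : Type u} (y0 : Y) {A : Type v} [AddCommGroup A]
    {Q : AddSubgroup A} {n : ℕ} (hq : ∀ a ∈ Q, n • a = 0 → a = 0)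
    (f : Smash Y y0 A) (hf : ∀ y, (f : Y →₀ A) y ∈ Q) (h : n • f = 0) : f = 0 := by
  apply Subtype.ext
  ext y
  have : ((n • f : Smash Y y0 A) : Y →₀ A) y = 0 := by rw [h]; rfl
  have hval : n • ((f : Y →₀ A) y) = 0 := by
    rw [← this]
    show n • ((f : Y →₀ A) y) = ((n • (f : Y →₀ A)) y)
    simp
  simpa using hq _ (hf y) hval

theorem smash_div {Y : Type u} (y0 : Y) {A : Type v} [AddCommGroup A]
    {Q : AddSubgroup A} {n : ℕ} {d : A → A} (hd0 : d 0 = 0)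
    (hd : ∀ a ∈ Q, d a ∈ Q ∧ n • d a = a)
    (f : Smash Y y0 A) (hf : ∀ y, (f : Y →₀ A) y ∈ Q) :
    ∃ g : Smash Y y0 A, (∀ y, (g : Y →₀ A) y ∈ Q) ∧ n • g = f := by
  refine ⟨⟨Finsupp.mapRange d hd0 f.1, by
      show Finsupp.mapRange d hd0 f.1 y0 = 0
      rw [Finsupp.mapRange_apply, f.2, hd0]⟩, ?_, ?_⟩
  · intro y
    show Finsupp.mapRange d hd0 f.1 y ∈ Q
    rw [Finsupp.mapRange_apply]
    by_cases h : (f : Y →₀ A) y = 0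
    · rw [h, hd0]; exact Q.zero_mem
    · exact (hd _ (hf y)).1
  · apply Subtype.ext
    ext y
    show (n • Finsupp.mapRange d hd0 f.1) y = (f : Y →₀ A) y
    rw [Finsupp.smul_apply, Finsupp.mapRange_apply]
    exact (hd _ (hf y)).2

/-- The existence of a pointwise division function for a uniquely divisible subgroup. -/
theorem exists_div {A : Type v} [AddCommGroup A] (Q : AddSubgroup A)
    (hQ : UniquelyDivisible Q) (n : ℕ) (hn : 1 ≤ n) :
    ∃ d : A → A, d 0 = 0 ∧ ∀ a ∈ Q, d a ∈ Q ∧ n • d a = a := by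
  classical
  refine ⟨fun a => if h : a ∈ Q then ((hQ ⟨a, h⟩ n hn).choose : A) else 0, ?_, ?_⟩
  · simp only [dif_pos Q.zero_mem]
    have h0 : (0 : ↥Q) = (hQ (⟨0, Q.zero_mem⟩ : ↥Q) n hn).choose := by
      apply (hQ (⟨0, Q.zero_mem⟩ : ↥Q) n hn).choose_spec.2
      rw [smul_zero]
      exact Subtype.ext rfl
    rw [← h0]
    rfl
  · intro a ha
    simp only [dif_pos ha]
    refine ⟨SetLike.coe_mem _, ?_⟩
    have := (hQ (⟨a, ha⟩ : ↥Q) n hn).choose_spec.1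
    have := congrArg (Subtype.val) this
    simpa using this

theorem q_tf {A : Type v} [AddCommGroup A] (Q : AddSubgroup A)
    (hQ : UniquelyDivisible Q) (n : ℕ) (hn : 1 ≤ n) :
    ∀ a ∈ Q, n • a = 0 → a = 0 := by
  intro a ha h
  have h1 : n • (⟨a, ha⟩ : ↥Q) = 0 := Subtype.ext (by simpa)
  have h2 : n • (0 : ↥Q) = 0 := by simp
  have := (hQ 0 n hn).unique h1 h2
  simpa [Subtype.ext_iff] using this


theorem smashRange_idem {Y : Type u} (y0 : Y) {A : Type v} [AddCommGroup A]
    {φ : A →+ A} (hidem : ∀ a, φ (φ a) = φ a) (f : Smash Y y0 A) :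
    smashRange y0 φ (smashRange y0 φ f) = smashRange y0 φ f := by
  apply Subtype.ext
  ext y
  rw [smashRange_apply, smashRange_apply]
  exact hidem _

/-- Pointwise application of `φ : A →+ A` to elements of `lim (F ∧ A)`. -/
noncomputable def glimRange {D : Type u} [Category.{v} D] (F : D ⥤ Pointed.{w})
    {A : Type*} [AddCommGroup A] (φ : A →+ A) : glim F A →+ glim F A where
  toFun h := ⟨fun d => smashRange (F.obj d).point φ (h.1 d), by
    intro d d' u
    rw [smashMap_smashRange, h.2 u]⟩
  map_zero' := Subtype.ext (funext fun d => by
    show smashRange (F.obj d).point φ 0 = 0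
    exact map_zero _)
  map_add' a b := Subtype.ext (funext fun d => by
    show smashRange (F.obj d).point φ (a.1 d + b.1 d) = _
    exact map_add _ _ _)

theorem glimRange_apply {D : Type u} [Category.{v} D] (F : D ⥤ Pointed.{w})
    {A : Type*} [AddCommGroup A] (φ : A →+ A) (h : glim F A) (d : D) :
    (glimRange F φ h).1 d = smashRange (F.obj d).point φ (h.1 d) := rfl

theorem rho_smashRange {D : Type u} [Category.{v} D] (F : D ⥤ Pointed.{w})
    {A : Type*} [AddCommGroup A] (φ : A →+ A) (f : Smash (plim F) (plimPt F) A) :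
    rho F A (smashRange (plimPt F) φ f) = glimRange F φ (rho F A f) := by
  apply Subtype.ext
  funext d
  show smashMap (plimPt F) (F.obj d).point (fun x => x.1 d) A (smashRange (plimPt F) φ f)
      = smashRange (F.obj d).point φ (smashMap (plimPt F) (F.obj d).point (fun x => x.1 d) A f)
  exact smashMap_smashRange _ _ _ φ f

theorem glimRange_fixed_iff {D : Type u} [Category.{v} D] (F : D ⥤ Pointed.{w})
    {A : Type*} [AddCommGroup A] (φ : A →+ A) (h : glim F A) :
    glimRange F φ h = h ↔
      ∀ d, smashRange (F.obj d).point φ (h.1 d) = h.1 d := by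
  constructor
  · intro hh d
    exact congrFun (congrArg Subtype.val hh) d
  · intro hh
    exact Subtype.ext (funext hh)

theorem glim_tf {D : Type u} [Category.{v} D] (F : D ⥤ Pointed.{w})
    {A : Type*} [AddCommGroup A] {Q : AddSubgroup A} {n : ℕ}
    (hq : ∀ a ∈ Q, n • a = 0 → a = 0) (h : glim F A)
    (hv : ∀ d y, ((h.1 d).1 : (F.obj d).X →₀ A) y ∈ Q)
    (hnh : n • h = 0) : h = 0 := by
  apply Subtype.ext
  funext d
  have h1 : (n • h).1 d = 0 := by rw [hnh]; rfl
  have h2 : (n • h).1 = n • h.1 := by exact_mod_cast rfl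
  rw [h2] at h1
  exact smash_tf _ hq _ (hv d) h1

theorem smashMap_mem_Q {Y : Type u} {Z : Type v} (y0 : Y) (z0 : Z) (g : Y → Z)
    {A : Type w} [AddCommGroup A] {Q : AddSubgroup A} {φ : A →+ A}
    (hmem : ∀ a, φ a ∈ Q) (hfix : ∀ a ∈ Q, φ a = a)
    (f : Smash Y y0 A) (hf : ∀ y, (f : Y →₀ A) y ∈ Q) :
    ∀ z, ((smashMap y0 z0 g A f : Smash Z z0 A) : Z →₀ A) z ∈ Q := by
  rw [← smashRange_fixed_iff y0 hmem hfix] at hf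
  rw [← smashRange_fixed_iff z0 hmem hfix]
  conv_lhs => rw [← hf]
  conv_rhs => rw [← hf]
  rw [smashMap_smashRange, smashRange_idem z0 (fun a => hfix _ (hmem a))]

theorem glim_div {D : Type u} [Category.{v} D] (F : D ⥤ Pointed.{w})
    {A : Type*} [AddCommGroup A] {Q : AddSubgroup A} {φ : A →+ A} {n : ℕ} (hn : 1 ≤ n)
    (hmem : ∀ a, φ a ∈ Q) (hfix : ∀ a ∈ Q, φ a = a)
    (hq : ∀ a ∈ Q, n • a = 0 → a = 0)
    {d : A → A} (hd0 : d 0 = 0) (hd : ∀ a ∈ Q, d a ∈ Q ∧ n • d a = a)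
    (h : glim F A)
    (hv : ∀ e y, ((h.1 e).1 : (F.obj e).X →₀ A) y ∈ Q) :
    ∃ g : glim F A,
      (∀ e y, ((g.1 e).1 : (F.obj e).X →₀ A) y ∈ Q) ∧
      n • g = h := by
  choose gg hg1 hg2 using fun e => smash_div (F.obj e).point hd0 hd (h.1 e) (hv e)
  have hmemglim : gg ∈ glim F A := by
    intro e e' u
    have key : smashMap (F.obj e).point (F.obj e').point (F.map u).toFun A (gg e) - gg e'
        = 0 := by
      apply smash_tf _ hq
      · intro y
        have hsub : ((smashMap (F.obj e).point (F.obj e').point (F.map u).toFun A (gg e)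
            - gg e' : Smash (F.obj e').X (F.obj e').point A) : _ →₀ A) y
            = ((smashMap (F.obj e).point (F.obj e').point (F.map u).toFun A (gg e) :
                Smash (F.obj e').X (F.obj e').point A) : _ →₀ A) y
              - ((gg e' : Smash (F.obj e').X (F.obj e').point A) : _ →₀ A) y := by
          simp
        rw [hsub]
        exact Q.sub_mem (smashMap_mem_Q _ _ _ hmem hfix (gg e) (hg1 e) y) (hg1 e' y)
      · rw [smul_sub, ← map_nsmul, hg2 e, hg2 e', h.2 u, sub_self]
    have := sub_eq_zero.mp key
    exact this
  refine ⟨⟨gg, hmemglim⟩, fun e => hg1 e, ?_⟩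
  apply Subtype.ext
  have h2 : ((n • (⟨gg, hmemglim⟩ : glim F A)).1 : ∀ e, _) = n • gg := by exact_mod_cast rfl
  rw [h2]
  funext e
  exact hg2 e


theorem smash_bd {Y : Type u} (y0 : Y) {A : Type v} [AddCommGroup A]
    {B : AddSubgroup A} {m : ℕ} (hb : ∀ a ∈ B, m • a = 0)
    (f : Smash Y y0 A) (hf : ∀ y, (f : Y →₀ A) y ∈ B) : m • f = 0 := by
  apply Subtype.ext
  ext y
  have : ((m • f : Smash Y y0 A) : Y →₀ A) y = m • ((f : Y →₀ A) y) := by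
    have h2 : ((m • f : Smash Y y0 A) : Y →₀ A) = m • (f : Y →₀ A) := by exact_mod_cast rfl
    rw [h2, Finsupp.smul_apply]
  rw [this]
  simpa using hb _ (hf y)

theorem smashRange_eq_zero_iff {Y : Type u} (y0 : Y) {A : Type v} [AddCommGroup A]
    (φ : A →+ A) (f : Smash Y y0 A) :
    smashRange y0 φ f = 0 ↔ ∀ y, φ ((f : Y →₀ A) y) = 0 := by
  rw [Subtype.ext_iff, Finsupp.ext_iff]
  constructor
  · intro h y
    have := h y
    rwa [smashRange_apply] at this
  · intro h y
    rw [smashRange_apply]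
    exact h y

theorem glimRange_idem {D : Type u} [Category.{v} D] (F : D ⥤ Pointed.{w})
    {A : Type*} [AddCommGroup A] {φ : A →+ A} (hidem : ∀ a, φ (φ a) = φ a)
    (h : glim F A) : glimRange F φ (glimRange F φ h) = glimRange F φ h := by
  apply Subtype.ext
  funext e
  show smashRange (F.obj e).point φ (smashRange (F.obj e).point φ (h.1 e)) = _
  exact smashRange_idem _ hidem _

theorem glim_bd {D : Type u} [Category.{v} D] (F : D ⥤ Pointed.{w})
    {A : Type*} [AddCommGroup A] {B : AddSubgroup A} {m : ℕ}
    (hb : ∀ a ∈ B, m • a = 0) (h : glim F A)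
    (hv : ∀ e y, ((h.1 e).1 : (F.obj e).X →₀ A) y ∈ B) : m • h = 0 := by
  apply Subtype.ext
  funext e
  have h2 : (m • h).1 = m • h.1 := by exact_mod_cast rfl
  have h3 : (m • h).1 e = m • h.1 e := by rw [h2]; rfl
  rw [h3]
  have := smash_bd (F.obj e).point hb (h.1 e) (hv e)
  rw [this]
  rfl

/-- Pointwise application of `φ` to elements of the kernel of `ρ`. -/
noncomputable def kerRange {D : Type u} [Category.{v} D] (F : D ⥤ Pointed.{w})
    {A : Type*} [AddCommGroup A] (φ : A →+ A) : (rho F A).ker →+ (rho F A).ker where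
  toFun f := ⟨smashRange (plimPt F) φ f.1, by
    rw [AddMonoidHom.mem_ker, rho_smashRange, AddMonoidHom.mem_ker.mp f.2, map_zero]⟩
  map_zero' := Subtype.ext (by
    show smashRange (plimPt F) φ 0 = 0
    exact map_zero _)
  map_add' a b := Subtype.ext (by
    show smashRange (plimPt F) φ (a.1 + b.1) = _
    exact map_add _ _ _)

theorem kerRange_apply {D : Type u} [Category.{v} D] (F : D ⥤ Pointed.{w})
    {A : Type*} [AddCommGroup A] (φ : A →+ A) (f : (rho F A).ker) :
    (kerRange F φ f).1 = smashRange (plimPt F) φ f.1 := rfl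

end Aux

/-- Let `A` be an abelian group, `D` a small category and `F : D ⥤ Set_*` a diagram of
pointed sets.  If `A` is almost uniquely divisible (`A = Q ⊕ B` with `Q` uniquely
divisible and `B` bounded), then the kernel and the cokernel of the natural map
`ρ : (lim_D F) ∧ A → lim_D (F ∧ A)` are almost uniquely divisible. -/
theorem stmt6 {D : Type u} [Category.{v} D] (F : D ⥤ Pointed.{w})
    {A : Type*} [AddCommGroup A] (hA : AlmostUniquelyDivisible A) :
    AlmostUniquelyDivisible (rho F A).ker ∧
      AlmostUniquelyDivisible (↥(glim F A) ⧸ (rho F A).range) := by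
  classical
  obtain ⟨Q, B, hc, hQuniq, m, hm, hmB⟩ := hA
  have hc' : IsCompl (AddSubgroup.toIntSubmodule Q) (AddSubgroup.toIntSubmodule B) :=
    AddSubgroup.toIntSubmodule.isCompl hc
  set π := (AddSubgroup.toIntSubmodule Q).projectionOnto
    (AddSubgroup.toIntSubmodule B) hc' with hπdef
  let φ : A →+ A :=
    { toFun := fun a => (π a : A)
      map_zero' := by simp
      map_add' := fun a b => by simp }
  have hφ : ∀ a, φ a = (π a : A) := fun a => rfl
  have hmem : ∀ a, φ a ∈ Q := fun a => (π a).2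
  have hfix : ∀ a ∈ Q, φ a = a := by
    intro a ha
    have h1 := Submodule.linearProjOfIsCompl_apply_left hc'
      (⟨a, ha⟩ : AddSubgroup.toIntSubmodule Q)
    rw [hφ]
    exact congrArg Subtype.val h1
  have hsubB : ∀ a, a - φ a ∈ B := by
    intro a
    have h1 := Submodule.projection_add_projection_eq_self hc' a
    have h2 : a - φ a =
        ((AddSubgroup.toIntSubmodule B).linearProjOfIsCompl _ hc'.symm a : A) := by
      rw [hφ]
      exact sub_eq_iff_eq_add'.mpr h1.symm
    rw [h2]
    exact ((AddSubgroup.toIntSubmodule B).linearProjOfIsCompl _ hc'.symm a).2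
  have hidemA : ∀ a, φ (φ a) = φ a := fun a => hfix _ (hmem a)
  have hkerB : ∀ a, φ a = 0 → a ∈ B := by
    intro a h
    have := hsubB a
    rwa [h, sub_zero] at this
  have hBzero : ∀ a ∈ B, φ a = 0 := by
    intro a ha
    rw [hφ]
    have := Submodule.projectionOnto_apply_of_mem_right hc'
      (show a ∈ AddSubgroup.toIntSubmodule B from ha)
    rw [this]
    rfl
  constructor
  · -- the kernel
    refine aud_of_idem (kerRange F φ) ?_ ?_ ?_ m hm ?_
    · intro g
      exact Subtype.ext (smashRange_idem _ hidemA _)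
    · intro g hg n hn
      obtain ⟨d, hd0, hd⟩ := exists_div Q hQuniq n hn
      have hqtf := q_tf Q hQuniq n hn
      have hg1 : smashRange (plimPt F) φ g.1 = g.1 := congrArg Subtype.val hg
      have hvals := (smashRange_fixed_iff _ hmem hfix _).mp hg1
      obtain ⟨g', hg'Q, hg'n⟩ := smash_div (plimPt F) hd0 hd g.1 hvals
      have hg'fix : smashRange (plimPt F) φ g' = g' :=
        (smashRange_fixed_iff _ hmem hfix _).mpr hg'Q
      have hker : g' ∈ (rho F A).ker := by
        rw [AddMonoidHom.mem_ker]
        apply glim_tf F hqtf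
        · intro e y
          have hfix2 : glimRange F φ (rho F A g') = rho F A g' := by
            rw [← rho_smashRange, hg'fix]
          have hcomp := (glimRange_fixed_iff F φ _).mp hfix2 e
          exact (smashRange_fixed_iff _ hmem hfix _).mp hcomp y
        · rw [← map_nsmul, hg'n]
          exact AddMonoidHom.mem_ker.mp g.2
      refine ⟨⟨g', hker⟩, ?_, ?_⟩
      · exact Subtype.ext hg'fix
      · exact Subtype.ext hg'n
    · intro g hg n hn hng
      have hqtf := q_tf Q hQuniq n hn
      have hg1 : smashRange (plimPt F) φ g.1 = g.1 := congrArg Subtype.val hg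
      have hvals := (smashRange_fixed_iff _ hmem hfix _).mp hg1
      have h3 : n • g.1 = 0 := congrArg Subtype.val hng
      exact Subtype.ext (smash_tf _ hqtf g.1 hvals h3)
    · intro g hg
      have hg1 : smashRange (plimPt F) φ g.1 = 0 := congrArg Subtype.val hg
      have hvals : ∀ y, (g.1 : plim F →₀ A) y ∈ B := by
        intro y
        have := (smashRange_eq_zero_iff _ φ g.1).mp hg1 y
        exact hkerB _ this
      exact Subtype.ext (smash_bd _ hmB g.1 hvals)
  · -- the cokernel
    have hcomp : (rho F A).range ≤ ((rho F A).range).comap (glimRange F φ) := by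
      rintro x ⟨f, rfl⟩
      rw [AddSubgroup.mem_comap, ← rho_smashRange]
      exact ⟨_, rfl⟩
    refine aud_of_idem
      (QuotientAddGroup.map (rho F A).range (rho F A).range (glimRange F φ) hcomp)
      ?_ ?_ ?_ m hm ?_
    · intro x
      refine QuotientAddGroup.induction_on x ?_
      intro h
      rw [QuotientAddGroup.map_mk, QuotientAddGroup.map_mk, glimRange_idem F hidemA]
    · intro x hx n hn
      obtain ⟨h, rfl⟩ := QuotientAddGroup.mk_surjective x
      rw [QuotientAddGroup.map_mk] at hx
      obtain ⟨d, hd0, hd⟩ := exists_div Q hQuniq n hn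
      have hqtf := q_tf Q hQuniq n hn
      have hh'fix : glimRange F φ (glimRange F φ h) = glimRange F φ h :=
        glimRange_idem F hidemA h
      have hh'vals : ∀ e y, (((glimRange F φ h).1 e).1 : (F.obj e).X →₀ A) y ∈ Q := by
        intro e y
        have := (glimRange_fixed_iff F φ _).mp hh'fix e
        exact (smashRange_fixed_iff _ hmem hfix _).mp this y
      obtain ⟨g, hgQ, hgn⟩ := glim_div F hn hmem hfix hqtf hd0 hd _ hh'vals
      refine ⟨QuotientAddGroup.mk g, ?_, ?_⟩
      · rw [QuotientAddGroup.map_mk]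
        congr 1
        apply (glimRange_fixed_iff F φ _).mpr
        intro e
        exact (smashRange_fixed_iff _ hmem hfix _).mpr (hgQ e)
      · have hmk : (n • (QuotientAddGroup.mk g : ↥(glim F A) ⧸ (rho F A).range))
            = QuotientAddGroup.mk (n • g) :=
          ((QuotientAddGroup.mk' (rho F A).range).map_nsmul n g).symm
        rw [hmk, hgn]
        exact hx
    · intro x hx n hn hnx
      obtain ⟨h, rfl⟩ := QuotientAddGroup.mk_surjective x
      rw [QuotientAddGroup.map_mk] at hx
      have hqtf := q_tf Q hQuniq n hn
      obtain ⟨d, hd0, hd⟩ := exists_div Q hQuniq n hn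
      set h' := glimRange F φ h with hh'def
      have hh'fix : glimRange F φ h' = h' := glimRange_idem F hidemA h
      -- n • h' ∈ range
      have hn1 : (QuotientAddGroup.mk (n • h') : ↥(glim F A) ⧸ (rho F A).range) = 0 := by
        have hmk : (QuotientAddGroup.mk (n • h') : ↥(glim F A) ⧸ (rho F A).range)
            = n • QuotientAddGroup.mk h' :=
          (QuotientAddGroup.mk' (rho F A).range).map_nsmul n h'
        rw [hmk, hx, hnx]
      have hn2 : n • h' ∈ (rho F A).range := (QuotientAddGroup.eq_zero_iff _).mp hn1
      obtain ⟨f, hf⟩ := hn2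
      -- replace f by its φ-projection
      have hf2 : rho F A (smashRange (plimPt F) φ f) = n • h' := by
        rw [rho_smashRange, hf, map_nsmul, hh'fix]
      have hf2fix : smashRange (plimPt F) φ (smashRange (plimPt F) φ f)
          = smashRange (plimPt F) φ f := smashRange_idem _ hidemA f
      have hf2vals := (smashRange_fixed_iff _ hmem hfix _).mp hf2fix
      obtain ⟨f₃, hf₃Q, hf₃n⟩ := smash_div (plimPt F) hd0 hd _ hf2vals
      have hf₃fix : smashRange (plimPt F) φ f₃ = f₃ :=
        (smashRange_fixed_iff _ hmem hfix _).mpr hf₃Q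
      have hw : h' - rho F A f₃ = 0 := by
        apply glim_tf F hqtf
        · intro e y
          have hrfix : glimRange F φ (rho F A f₃) = rho F A f₃ := by
            rw [← rho_smashRange, hf₃fix]
          have hrvals : ∀ y, (((rho F A f₃).1 e).1 : (F.obj e).X →₀ A) y ∈ Q := by
            intro y
            have := (glimRange_fixed_iff F φ _).mp hrfix e
            exact (smashRange_fixed_iff _ hmem hfix _).mp this y
          have hh'vals : ∀ y, ((h'.1 e).1 : (F.obj e).X →₀ A) y ∈ Q := by
            intro y
            have := (glimRange_fixed_iff F φ _).mp hh'fix e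
            exact (smashRange_fixed_iff _ hmem hfix _).mp this y
          have hsub : (((h' - rho F A f₃).1 e).1 : (F.obj e).X →₀ A) y
              = ((h'.1 e).1 : (F.obj e).X →₀ A) y
                - (((rho F A f₃).1 e).1 : (F.obj e).X →₀ A) y := by
            exact_mod_cast rfl
          rw [hsub]
          exact Q.sub_mem (hh'vals y) (hrvals y)
        · rw [smul_sub, ← AddMonoidHom.map_nsmul (rho F A) n f₃, hf₃n, hf2, sub_self]
      have hmem' : h' ∈ (rho F A).range := by
        have := sub_eq_zero.mp hw
        rw [this]
        exact ⟨f₃, rfl⟩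
      have : (QuotientAddGroup.mk h' : ↥(glim F A) ⧸ (rho F A).range) = 0 :=
        (QuotientAddGroup.eq_zero_iff _).mpr hmem'
      rw [← hx]
      exact this
    · intro x hx
      obtain ⟨h, rfl⟩ := QuotientAddGroup.mk_surjective x
      rw [QuotientAddGroup.map_mk] at hx
      have hEGmem : glimRange F φ h ∈ (rho F A).range :=
        (QuotientAddGroup.eq_zero_iff _).mp hx
      have hdiffB : ∀ e y, (((h - glimRange F φ h).1 e).1 : (F.obj e).X →₀ A) y ∈ B := by
        intro e y
        apply hkerB
        have hEz : glimRange F φ (h - glimRange F φ h) = 0 := by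
          rw [map_sub, glimRange_idem F hidemA, sub_self]
        have hez := congrFun (congrArg Subtype.val hEz) e
        have : smashRange (F.obj e).point φ ((h - glimRange F φ h).1 e) = 0 := hez
        exact (smashRange_eq_zero_iff _ φ _).mp this y
      have hmd : m • (h - glimRange F φ h) = 0 := glim_bd F hmB _ hdiffB
      have hmh : m • h = m • glimRange F φ h := by
        have : m • h - m • glimRange F φ h = 0 := by rw [← smul_sub, hmd]
        exact sub_eq_zero.mp this
      have hmhr : m • h ∈ (rho F A).range := by
        rw [hmh]
        exact AddSubgroup.nsmul_mem _ hEGmem m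
      have hmk : (m • (QuotientAddGroup.mk h : ↥(glim F A) ⧸ (rho F A).range))
          = QuotientAddGroup.mk (m • h) :=
        ((QuotientAddGroup.mk' (rho F A).range).map_nsmul m h).symm
      rw [hmk]
      exact (QuotientAddGroup.eq_zero_iff _).mpr hmhr
end

section
/- Let A be an abelian group, 𝒯 a directed poset and X : 𝒯 → Set_* a diagram of pointed sets. Then the natural map ρ : (lim_𝒯 X)∧A → lim_𝒯(X∧A) is injective. -/
open CategoryTheory Finsupp

universe u v w

/-- Let `A` be an abelian group, `T` a directed poset and `F` a diagram of pointed
sets indexed by `T` (with structure maps `X(t) → X(s)` for `t ≥ s`, i.e. a functor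
`Tᵒᵖ ⥤ Set_*`).  Then the natural map `ρ : (lim_T X) ∧ A → lim_T (X ∧ A)` is
injective. -/
theorem stmt7 {T : Type u} [PartialOrder T] [IsDirected T (· ≤ ·)] [Nonempty T]
    (F : Tᵒᵖ ⥤ Pointed.{w}) (A : Type*) [AddCommGroup A] :
    Function.Injective (rho F A) := by
  classical
  rw [injective_iff_map_eq_zero]
  intro f hf
  apply Subtype.ext
  ext x
  show f.1 x = 0
  by_cases hx : f.1 x = 0
  · exact hx
  exfalso
  set S : Finset (plim F) := insert (plimPt F) f.1.support with hS
  have hsep : ∀ p : plim F × plim F, p.1 ≠ p.2 →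
      ∃ t : T, p.1.1 (Opposite.op t) ≠ p.2.1 (Opposite.op t) := by
    intro p hp
    by_contra h
    push_neg at h
    apply hp
    apply Subtype.ext
    funext d
    have := h d.unop
    simpa using this
  choose w hw using hsep
  set w' : plim F × plim F → T := fun p =>
    if h : p.1 ≠ p.2 then w p h else Classical.arbitrary T with hw'
  obtain ⟨t, ht⟩ := Finset.exists_le ((S ×ˢ S).image w')
  set d : Tᵒᵖ := Opposite.op t with hd
  set g : plim F → (F.obj d).X := fun x => x.1 d with hg
  have hinj : Set.InjOn g ↑S := by
    intro a ha b hb hab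
    by_contra hne
    have hts : w' (a, b) ≤ t := ht _ (Finset.mem_image_of_mem w'
      (Finset.mem_product.mpr ⟨ha, hb⟩))
    have hws : w' (a, b) = w (a, b) hne := by simp [hw', hne]
    set s := w (a, b) hne with hsdef
    have hst : s ≤ t := hws ▸ hts
    have u : d ⟶ Opposite.op s := (homOfLE hst).op
    have ha2 := a.2 u
    have hb2 := b.2 u
    apply hw (a, b) hne
    show a.1 (Opposite.op s) = b.1 (Opposite.op s)
    rw [← ha2, ← hb2]
    exact congrArg _ hab
  have hxS : x ∈ S := Finset.mem_insert_of_mem (Finsupp.mem_support_iff.mpr hx)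
  have hptS : plimPt F ∈ S := Finset.mem_insert_self _ _
  have hxpt : x ≠ plimPt F := by
    intro h
    exact hx (h ▸ f.2)
  have hcomp : (rho F A f).1 d = 0 := by rw [hf]; rfl
  have hval : ((Finsupp.mapDomain g f.1).erase (F.obj d).point) (g x) = 0 := by
    have : ((smashMap (plimPt F) (F.obj d).point g A f) : (F.obj d).X →₀ A) = 0 := by
      have := congrArg Subtype.val hcomp
      exact this
    exact DFunLike.congr_fun this (g x)
  have hgx : g x ≠ (F.obj d).point := by
    intro h
    apply hxpt
    exact hinj hxS hptS h
  rw [Finsupp.erase_ne hgx] at hval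
  rw [Finsupp.mapDomain_apply' ↑S f.1 (by
      intro a ha
      exact Finset.mem_insert_of_mem ha) hinj hxS] at hval
  exact hx hval
end

section
/- Let A be an abelian group, 𝒯 a directed poset and X : 𝒯 → Set_* a diagram of pointed sets. An element h ∈ lim_𝒯(X∧A) lies in the image of the natural map ρ : (lim_𝒯 X)∧A → lim_𝒯(X∧A) if and only if the set of cardinalities {|supp(h(t))| : t ∈ 𝒯} is bounded above, where supp(h(t)) = {a ∈ X(t) : h(t)_a ≠ 0}. -/
open CategoryTheory Finsupp

universe u v w

section AuxLemmas

open Opposite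

theorem smashMap_coe {Y : Type*} {Z : Type*} (y0 : Y) (z0 : Z) (g : Y → Z)
    (A : Type*) [AddCommGroup A] (f : Smash Y y0 A) :
    (smashMap y0 z0 g A f).1 = (Finsupp.mapDomain g f.1).erase z0 := rfl

theorem smashMap_support_subset {Y : Type*} {Z : Type*} [DecidableEq Z] (y0 : Y) (z0 : Z)
    (g : Y → Z) (A : Type*) [AddCommGroup A] (f : Smash Y y0 A) :
    (smashMap y0 z0 g A f).1.support ⊆ f.1.support.image g := by
  rw [smashMap_coe, Finsupp.support_erase]
  exact (Finset.erase_subset _ _).trans Finsupp.mapDomain_support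

theorem smashMap_card_le {Y : Type*} {Z : Type*} (y0 : Y) (z0 : Z)
    (g : Y → Z) (A : Type*) [AddCommGroup A] (f : Smash Y y0 A) :
    (smashMap y0 z0 g A f).1.support.card ≤ f.1.support.card := by
  classical
  exact (Finset.card_le_card (smashMap_support_subset y0 z0 g A f)).trans
    Finset.card_image_le

theorem smash_bij {Y : Type*} {Z : Type*} (y0 : Y) (z0 : Z) (g : Y → Z)
    (A : Type*) [AddCommGroup A] (f : Smash Y y0 A) (f' : Smash Z z0 A)
    (heq : smashMap y0 z0 g A f = f')
    (hcard : f'.1.support.card = f.1.support.card) :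
    Set.InjOn g f.1.support ∧ (∀ b ∈ f.1.support, g b ∈ f'.1.support ∧ f'.1 (g b) = f.1 b)
      ∧ ∀ c ∈ f'.1.support, ∃ b ∈ f.1.support, g b = c := by
  classical
  have hsub : f'.1.support ⊆ f.1.support.image g := heq ▸ smashMap_support_subset y0 z0 g A f
  have himg : f'.1.support = f.1.support.image g :=
    Finset.eq_of_subset_of_card_le hsub (Finset.card_image_le.trans hcard.ge)
  have hinj : Set.InjOn g f.1.support := by
    apply Finset.injOn_of_card_image_eq
    rw [← himg, hcard]
  refine ⟨hinj, ?_, ?_⟩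
  · intro b hb
    have hmem : g b ∈ f'.1.support := by
      rw [himg]; exact Finset.mem_image_of_mem g hb
    refine ⟨hmem, ?_⟩
    have hgb : g b ≠ z0 := by
      intro hz
      have h2 := f'.2
      rw [mem_smash] at h2
      rw [Finsupp.mem_support_iff, hz, h2] at hmem
      exact hmem rfl
    have : f'.1 (g b) = (Finsupp.mapDomain g f.1) (g b) := by
      rw [← heq, smashMap_coe, Finsupp.erase_ne hgb]
    rw [this, Finsupp.mapDomain_apply' (↑f.1.support) _ subset_rfl hinj hb]
  · intro c hc
    rw [himg, Finset.mem_image] at hc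
    exact hc

theorem glim_card_mono {T : Type u} [PartialOrder T] (F : Tᵒᵖ ⥤ Pointed.{w})
    (A : Type*) [AddCommGroup A] (h : glim F A) {s t : T} (hst : s ≤ t) :
    (h.1 (op s)).1.support.card ≤ (h.1 (op t)).1.support.card := by
  have hc := h.2 (homOfLE hst).op
  rw [← hc]
  exact smashMap_card_le _ _ _ A _

theorem glim_construct {T : Type u} [PartialOrder T] [IsDirected T (· ≤ ·)]
    (F : Tᵒᵖ ⥤ Pointed.{w}) (A : Type*) [AddCommGroup A] (h : glim F A)
    (t0 : T) (hmax : ∀ t : T, t0 ≤ t →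
      (h.1 (op t)).1.support.card = (h.1 (op t0)).1.support.card) :
    h ∈ (rho F A).range := by
  classical
  let φ : ∀ {s t : T}, s ≤ t → (F.obj (op t)).X → (F.obj (op s)).X :=
    fun {s t} hst => (F.map (homOfLE hst).op).toFun
  have hcomp : ∀ {s t : T} (hst : s ≤ t),
      smashMap (F.obj (op t)).point (F.obj (op s)).point (φ hst) A (h.1 (op t)) = h.1 (op s) :=
    fun {s t} hst => h.2 (homOfLE hst).op
  have hfun : ∀ {a b c : T} (h1 : a ≤ b) (h2 : b ≤ c) (x : (F.obj (op c)).X),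
      φ h1 (φ h2 x) = φ (h1.trans h2) x := by
    intro a b c h1 h2 x
    have hco : (homOfLE (h1.trans h2)).op = (homOfLE h2).op ≫ (homOfLE h1).op := by
      rw [← op_comp, homOfLE_comp]
    show (F.map (homOfLE h1).op).toFun ((F.map (homOfLE h2).op).toFun x)
        = (F.map (homOfLE (h1.trans h2)).op).toFun x
    rw [hco, F.map_comp]
    rfl
  have hid : ∀ {t : T} (x : (F.obj (op t)).X), φ (le_refl t) x = x := by
    intro t x
    show (F.map (homOfLE (le_refl t)).op).toFun x = x
    have hre : (homOfLE (le_refl t)).op = 𝟙 (op t) := rfl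
    rw [hre, F.map_id]
    rfl
  have hcard : ∀ {s t : T} (hst : s ≤ t), t0 ≤ s →
      (h.1 (op s)).1.support.card = (h.1 (op t)).1.support.card := by
    intro s t hst h0
    rw [hmax s h0, hmax t (h0.trans hst)]
  have key : ∀ {s t : T} (hst : s ≤ t), t0 ≤ s →
      Set.InjOn (φ hst) (h.1 (op t)).1.support ∧
      (∀ b ∈ (h.1 (op t)).1.support, φ hst b ∈ (h.1 (op s)).1.support ∧
        (h.1 (op s)).1 (φ hst b) = (h.1 (op t)).1 b) ∧
      ∀ c ∈ (h.1 (op s)).1.support, ∃ b ∈ (h.1 (op t)).1.support, φ hst b = c :=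
    fun {s t} hst h0 => smash_bij _ _ _ A _ _ (hcomp hst) (hcard hst h0)
  have hex : ∀ (t : T) (ht : t0 ≤ t) (a : (F.obj (op t0)).X),
      a ∈ (h.1 (op t0)).1.support → ∃ b ∈ (h.1 (op t)).1.support, φ ht b = a :=
    fun t ht a ha => (key ht le_rfl).2.2 a ha
  choose σ hσmem hσmap using hex
  have huniq : ∀ (t : T) (ht : t0 ≤ t) (b : (F.obj (op t)).X), b ∈ (h.1 (op t)).1.support →
      ∀ (a) (ha : a ∈ (h.1 (op t0)).1.support), φ ht b = a → b = σ t ht a ha := by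
    intro t ht b hb a ha hba
    exact (key ht le_rfl).1 hb (hσmem t ht a ha) (by rw [hba, hσmap])
  have hcoh : ∀ (s t : T) (hst : s ≤ t) (h0 : t0 ≤ s) (a)
      (ha : a ∈ (h.1 (op t0)).1.support),
      φ hst (σ t (h0.trans hst) a ha) = σ s h0 a ha := by
    intro s t hst h0 a ha
    refine (huniq s h0 _ ?_ a ha ?_).symm.symm
    · exact ((key hst h0).2.1 _ (hσmem t _ a ha)).1
    · rw [hfun h0 hst]
      exact hσmap t _ a ha
  have hdir : ∀ s : T, ∃ t : T, s ≤ t ∧ t0 ≤ t := fun s => directed_of (· ≤ ·) s t0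
  choose up hup1 hup2 using hdir
  let x : ∀ (a : (F.obj (op t0)).X), a ∈ (h.1 (op t0)).1.support → ∀ s : T, (F.obj (op s)).X :=
    fun a ha s => φ (hup1 s) (σ (up s) (hup2 s) a ha)
  have hwd : ∀ (a) (ha : a ∈ (h.1 (op t0)).1.support) (s t : T) (hst : s ≤ t) (ht : t0 ≤ t),
      φ hst (σ t ht a ha) = x a ha s := by
    intro a ha s t hst ht
    obtain ⟨w, hw1, hw2⟩ := directed_of (· ≤ ·) t (up s)
    rw [← hcoh t w hw1 ht a ha, hfun hst hw1]
    show _ = φ (hup1 s) (σ (up s) (hup2 s) a ha)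
    rw [← hcoh (up s) w hw2 (hup2 s) a ha, hfun (hup1 s) hw2]
  have hx0 : ∀ (a) (ha : a ∈ (h.1 (op t0)).1.support), x a ha t0 = a := by
    intro a ha
    have h1 := hwd a ha t0 t0 le_rfl le_rfl
    rw [hid] at h1
    have h2 := hσmap t0 le_rfl a ha
    rw [hid] at h2
    rw [← h1, h2]
  have hxmem : ∀ (a) (ha : a ∈ (h.1 (op t0)).1.support),
      (fun d : Tᵒᵖ => x a ha d.unop) ∈ plim F := by
    intro a ha d d' u
    have hst : d'.unop ≤ d.unop := leOfHom u.unop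
    have hu : u = (homOfLE hst).op := Quiver.Hom.unop_inj (Subsingleton.elim _ _)
    rw [hu]
    show φ hst (x a ha d.unop) = x a ha d'.unop
    have h1 : φ hst (x a ha d.unop)
        = φ (hst.trans (hup1 d.unop)) (σ (up d.unop) (hup2 d.unop) a ha) :=
      hfun hst (hup1 d.unop) _
    rw [h1]
    exact hwd a ha d'.unop (up d.unop) (hst.trans (hup1 d.unop)) (hup2 d.unop)
  let xel : ∀ (a : (F.obj (op t0)).X), a ∈ (h.1 (op t0)).1.support → ↥(plim F) :=
    fun a ha => ⟨fun d => x a ha d.unop, hxmem a ha⟩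
  have hxel_ne : ∀ (a) (ha : a ∈ (h.1 (op t0)).1.support), xel a ha ≠ plimPt F := by
    intro a ha hEq
    have hval := congrArg (fun z : ↥(plim F) => z.1 (op t0)) hEq
    have ha2 : a = (F.obj (op t0)).point := by
      rw [← hx0 a ha]
      exact hval
    rw [Finsupp.mem_support_iff] at ha
    apply ha
    rw [ha2]
    exact (h.1 (op t0)).2
  let f0 : ↥(plim F) →₀ A :=
    ∑ a ∈ (h.1 (op t0)).1.support.attach,
      Finsupp.single (xel a.1 a.2) ((h.1 (op t0)).1 a.1)
  have hf0pt : f0 (plimPt F) = 0 := by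
    show (∑ a ∈ (h.1 (op t0)).1.support.attach,
      Finsupp.single (xel a.1 a.2) ((h.1 (op t0)).1 a.1)) (plimPt F) = 0
    rw [Finsupp.finset_sum_apply]
    apply Finset.sum_eq_zero
    intro a _
    exact Finsupp.single_eq_of_ne' (hxel_ne a.1 a.2)
  refine ⟨⟨f0, hf0pt⟩, ?_⟩
  have claimA : ∀ v : T, t0 ≤ v →
      (rho F A ⟨f0, hf0pt⟩).1 (op v) = h.1 (op v) := by
    intro v hv
    apply Subtype.ext
    show (Finsupp.mapDomain (fun z : ↥(plim F) => z.1 (op v)) f0).erase (F.obj (op v)).point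
        = (h.1 (op v)).1
    have hxv : ∀ (a) (ha : a ∈ (h.1 (op t0)).1.support), x a ha v = σ v hv a ha := by
      intro a ha
      rw [← hwd a ha v v le_rfl hv, hid]
    have hval : ∀ (a) (ha : a ∈ (h.1 (op t0)).1.support),
        (h.1 (op t0)).1 a = (h.1 (op v)).1 (σ v hv a ha) := by
      intro a ha
      have h1 := ((key hv le_rfl).2.1 (σ v hv a ha) (hσmem v hv a ha)).2
      rw [hσmap v hv a ha] at h1
      exact h1
    have hmap : Finsupp.mapDomain (fun z : ↥(plim F) => z.1 (op v)) f0
        = ∑ a ∈ (h.1 (op t0)).1.support.attach,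
            Finsupp.single (σ v hv a.1 a.2) ((h.1 (op v)).1 (σ v hv a.1 a.2)) := by
      have hsum := map_sum (Finsupp.mapDomain.addMonoidHom (fun z : ↥(plim F) => z.1 (op v)))
        (fun a : {y // y ∈ (h.1 (op t0)).1.support} =>
          Finsupp.single (xel a.1 a.2) ((h.1 (op t0)).1 a.1))
        (h.1 (op t0)).1.support.attach
      simp only [Finsupp.mapDomain.addMonoidHom_apply, Finsupp.mapDomain_single] at hsum
      show Finsupp.mapDomain (fun z : ↥(plim F) => z.1 (op v))
          (∑ a ∈ (h.1 (op t0)).1.support.attach,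
            Finsupp.single (xel a.1 a.2) ((h.1 (op t0)).1 a.1)) = _
      rw [hsum]
      apply Finset.sum_congr rfl
      intro a _
      show Finsupp.single (x a.1 a.2 v) ((h.1 (op t0)).1 a.1) = _
      rw [hxv a.1 a.2, hval a.1 a.2]
    rw [hmap]
    have hstep : (∑ a ∈ (h.1 (op t0)).1.support.attach,
        Finsupp.single (σ v hv a.1 a.2) ((h.1 (op v)).1 (σ v hv a.1 a.2)))
        = ∑ b ∈ (h.1 (op v)).1.support, Finsupp.single b ((h.1 (op v)).1 b) := by
      apply Finset.sum_bij (fun a _ => σ v hv a.1 a.2)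
      · intro a _
        exact hσmem v hv a.1 a.2
      · intro a1 _ a2 _ hEq
        apply Subtype.ext
        rw [← hσmap v hv a1.1 a1.2, ← hσmap v hv a2.1 a2.2, hEq]
      · intro b hb
        refine ⟨⟨φ hv b, ((key hv le_rfl).2.1 b hb).1⟩, Finset.mem_attach _ _, ?_⟩
        exact (huniq v hv b hb _ ((key hv le_rfl).2.1 b hb).1 rfl).symm
      · intro a _
        rfl
    rw [hstep]
    have hss : (∑ b ∈ (h.1 (op v)).1.support, Finsupp.single b ((h.1 (op v)).1 b))
        = (h.1 (op v)).1 := Finsupp.sum_single _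
    rw [hss]
    apply Finsupp.erase_of_notMem_support
    rw [Finsupp.mem_support_iff]
    intro hne
    exact hne (h.1 (op v)).2
  apply Subtype.ext
  funext d
  obtain ⟨t⟩ := d
  show (rho F A ⟨f0, hf0pt⟩).1 (op t) = h.1 (op t)
  have e1 := (rho F A ⟨f0, hf0pt⟩).2 (homOfLE (hup1 t)).op
  have e2 := h.2 (homOfLE (hup1 t)).op
  rw [← e1, ← e2, claimA (up t) (hup2 t)]

end AuxLemmas

/-- Let `A` be an abelian group, `T` a directed poset and `F : Tᵒᵖ ⥤ Set_*` a diagram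
of pointed sets.  An element `h ∈ lim_T (X ∧ A)` lies in the image of the natural map
`ρ : (lim_T X) ∧ A → lim_T (X ∧ A)` iff the set of cardinalities
`{|supp (h t)| : t ∈ T}` is bounded above. -/
theorem stmt8 {T : Type u} [PartialOrder T] [IsDirected T (· ≤ ·)] [Nonempty T]
    (F : Tᵒᵖ ⥤ Pointed.{w}) (A : Type*) [AddCommGroup A] (h : glim F A) :
    h ∈ (rho F A).range ↔
      ∃ N : ℕ, ∀ t : T, (h.1 (Opposite.op t)).1.support.card ≤ N := by
    classical
  constructor
  · rintro ⟨f, rfl⟩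
    refine ⟨f.1.support.card, fun t => ?_⟩
    exact smashMap_card_le (plimPt F) (F.obj (Opposite.op t)).point
      (fun z => z.1 (Opposite.op t)) A f
  · rintro ⟨N, hN⟩
    have hbdd : BddAbove (Set.range fun t : T => (h.1 (Opposite.op t)).1.support.card) := by
      refine ⟨N, ?_⟩
      rintro n ⟨t, rfl⟩
      exact hN t
    have hne : (Set.range fun t : T => (h.1 (Opposite.op t)).1.support.card).Nonempty :=
      ⟨_, ⟨Classical.arbitrary T, rfl⟩⟩
    obtain ⟨t0, ht0⟩ := Nat.sSup_mem hne hbdd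
    apply glim_construct F A h t0
    intro t ht
    have h1 : (h.1 (Opposite.op t)).1.support.card
        ≤ sSup (Set.range fun t : T => (h.1 (Opposite.op t)).1.support.card) :=
      le_csSup hbdd ⟨t, rfl⟩
    have h2 : (h.1 (Opposite.op t0)).1.support.card ≤ (h.1 (Opposite.op t)).1.support.card :=
      glim_card_mono F A h ht
    simp only [] at ht0
    omega
end

section
/- Let A be an abelian group, 𝒯 a directed poset and X : 𝒯 → Set_* a diagram of pointed sets. If A is torsion free, then the cokernel H(X,A) = lim_𝒯(X∧A) / ρ((lim_𝒯 X)∧A) of the natural map ρ is torsion free. -/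
open CategoryTheory Finsupp

universe u v w

/-- Let `A` be an abelian group, `T` a directed poset and `F : Tᵒᵖ ⥤ Set_*` a diagram
of pointed sets.  If `A` is torsion free then the cokernel
`H(X,A) = lim_T(X∧A) / ρ((lim_T X)∧A)` of the natural map `ρ` is torsion free. -/
theorem stmt9 {T : Type u} [PartialOrder T] [IsDirected T (· ≤ ·)] [Nonempty T]
    (F : Tᵒᵖ ⥤ Pointed.{w}) (A : Type*) [AddCommGroup A]
    (hA : ∀ (a : A) (n : ℕ), n ≠ 0 → n • a = 0 → a = 0) :
    ∀ (x : ↥(glim F A) ⧸ (rho F A).range) (n : ℕ), n ≠ 0 → n • x = 0 → x = 0 := by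
  classical
  intro x n hn hx
  induction x using QuotientAddGroup.induction_on with
  | H h =>
  have hx' : QuotientAddGroup.mk (n • h) = (0 : ↥(glim F A) ⧸ (rho F A).range) := by
    rw [← hx]
    exact (map_nsmul (QuotientAddGroup.mk' (rho F A).range) n h).symm
  obtain ⟨f, hf⟩ := (QuotientAddGroup.eq_zero_iff _).mp hx'
  -- hf : rho F A f = n • h
  set S : Finset ↥(plim F) := insert (plimPt F) f.1.support with hS
  have hpair : ∀ x y : ↥(plim F), ∃ t : T,
      x ≠ y → x.1 (Opposite.op t) ≠ y.1 (Opposite.op t) := by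
    intro x y
    by_cases hxy : x = y
    · exact ⟨Classical.arbitrary T, fun h' => absurd hxy h'⟩
    · have hne : x.1 ≠ y.1 := fun h' => hxy (Subtype.ext h')
      obtain ⟨d, hd⟩ := Function.ne_iff.mp hne
      exact ⟨d.unop, fun _ => by simpa using hd⟩
  choose tf htf using hpair
  obtain ⟨t0, ht0⟩ := ((S ×ˢ S).image (fun p => tf p.1 p.2)).exists_le
  set D : Tᵒᵖ := Opposite.op t0 with hD
  have sep : ∀ x ∈ S, ∀ y ∈ S, x.1 D = y.1 D → x = y := by
    intro x hxS y hyS hxyD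
    by_contra hxy
    have hle : tf x y ≤ t0 := ht0 _
      (Finset.mem_image.mpr ⟨(x, y), Finset.mem_product.mpr ⟨hxS, hyS⟩, rfl⟩)
    have u : D ⟶ Opposite.op (tf x y) := (homOfLE hle).op
    apply htf x y hxy
    rw [← x.2 u, ← y.2 u, hxyD]
  have hptmem : plimPt F ∈ S := Finset.mem_insert_self _ _
  have hg0 : plimPt F ∉ f.1.support := Finsupp.notMem_support_iff.mpr f.2
  have hsupp_ne : ∀ x ∈ f.1.support, x.1 D ≠ (F.obj D).point := by
    intro x hxm heq
    have hxS : x ∈ S := Finset.mem_insert_of_mem hxm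
    have hxe : x = plimPt F := sep x hxS (plimPt F) hptmem heq
    rw [hxe] at hxm
    exact hg0 hxm
  have hinj : Set.InjOn (fun z : ↥(plim F) => z.1 D) (S : Set ↥(plim F)) :=
    fun a ha b hb hab => sep a ha b hb hab
  have key : ∀ x ∈ f.1.support, f.1 x = n • (h.1 D).1 (x.1 D) := by
    intro x hxm
    have h1 : ((rho F A f).1 D).1 (x.1 D) = ((n • h : ↥(glim F A)).1 D).1 (x.1 D) := by
      rw [hf]
    have h2 : ((rho F A f).1 D).1 (x.1 D) = f.1 x := by
      show ((Finsupp.mapDomain (fun z : ↥(plim F) => z.1 D) f.1).erase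
          (F.obj D).point) (x.1 D) = f.1 x
      rw [Finsupp.erase_ne (hsupp_ne x hxm)]
      exact Finsupp.mapDomain_apply' (S : Set _) f.1
        (fun a ha => Finset.mem_coe.mpr (Finset.mem_insert_of_mem ha)) hinj
        (Finset.mem_coe.mpr (Finset.mem_insert_of_mem hxm))
    have h3 : ((n • h : ↥(glim F A)).1 D).1 (x.1 D) = n • (h.1 D).1 (x.1 D) := rfl
    rw [h2, h3] at h1
    exact h1
  set g : ↥(plim F) →₀ A := Finsupp.onFinset f.1.support
      (fun x => if x ∈ f.1.support then (h.1 D).1 (x.1 D) else 0)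
      (fun a ha => by by_contra hc; simp [hc] at ha) with hgdef
  have hgmem : g ∈ Smash ↥(plim F) (plimPt F) A := by
    show g (plimPt F) = 0
    rw [hgdef, Finsupp.onFinset_apply, if_neg hg0]
  have hng : n • (⟨g, hgmem⟩ : Smash ↥(plim F) (plimPt F) A) = f := by
    apply Subtype.ext
    show n • g = f.1
    ext x
    rw [Finsupp.smul_apply]
    by_cases hxm : x ∈ f.1.support
    · rw [hgdef, Finsupp.onFinset_apply, if_pos hxm, ← key x hxm]
    · rw [hgdef, Finsupp.onFinset_apply, if_neg hxm, Finsupp.notMem_support_iff.mp hxm,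
        smul_zero]
  have hrg : n • (rho F A ⟨g, hgmem⟩) = n • h := by
    rw [← map_nsmul, hng, hf]
  have tfglim : ∀ z : ↥(glim F A), n • z = 0 → z = 0 := by
    intro z hz
    apply Subtype.ext
    funext d
    apply Subtype.ext
    ext y
    have hz1 : n • (z.1 d).1 y = 0 := by
      have := congrArg (fun w : ↥(glim F A) => (w.1 d).1 y) hz
      simpa using this
    exact hA _ n hn hz1
  have hfin : rho F A ⟨g, hgmem⟩ = h := by
    have := tfglim (rho F A ⟨g, hgmem⟩ - h) (by rw [smul_sub, hrg, sub_self])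
    exact sub_eq_zero.mp this
  exact (QuotientAddGroup.eq_zero_iff h).mpr ⟨⟨g, hgmem⟩, hfin⟩
end

section
/- Let A be an abelian group, 𝒯 a directed poset and X : 𝒯 → Set_* a diagram of pointed sets such that X(t) is finite for every t ∈ 𝒯. If A is p-divisible for a prime p (pA = A), then G(X,A) = lim_𝒯(X∧A) and the cokernel H(X,A) of the natural map ρ are p-divisible. Consequently, if A is divisible then G(X,A) and H(X,A) are divisible. -/
open CategoryTheory Finsupp

universe u v w

local instance pointedDiagramTop {C : Type*} [CategoryTheory.Category C]
    (F : C ⥤ Pointed.{w}) (d : C) : TopologicalSpace (F.obj d).X := ⊥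

local instance pointedDiagramDiscrete {C : Type*} [CategoryTheory.Category C]
    (F : C ⥤ Pointed.{w}) (d : C) : DiscreteTopology (F.obj d).X := ⟨rfl⟩

section Aux

variable {T : Type u} [PartialOrder T] (F : Tᵒᵖ ⥤ Pointed.{w})

/-- The structure map `X(t) → X(s)` for `s ≤ t`. -/
def theta {s t : T} (h : s ≤ t) : (F.obj (Opposite.op t)).X → (F.obj (Opposite.op s)).X :=
  (F.map (homOfLE h).op).toFun

theorem theta_point {s t : T} (h : s ≤ t) :
    theta F h (F.obj (Opposite.op t)).point = (F.obj (Opposite.op s)).point :=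
  (F.map (homOfLE h).op).map_point

theorem theta_comp {a b c : T} (h1 : a ≤ b) (h2 : b ≤ c) (x : (F.obj (Opposite.op c)).X) :
    theta F h1 (theta F h2 x) = theta F (h1.trans h2) x := by
  show (F.map (homOfLE h2).op ≫ F.map (homOfLE h1).op).toFun x = _
  rw [← F.map_comp, ← op_comp, homOfLE_comp]
  rfl

theorem theta_refl {a : T} (h : a ≤ a) (x : (F.obj (Opposite.op a)).X) :
    theta F h x = x := by
  have : (homOfLE h).op = 𝟙 (Opposite.op a) := rfl
  show (F.map (homOfLE h).op).toFun x = x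
  rw [this, F.map_id]
  rfl

theorem isClosed_plim : IsClosed (plim F) := by
  have : plim F = ⋂ (d : Tᵒᵖ) (d' : Tᵒᵖ) (u : d ⟶ d'),
      {x : ∀ d : Tᵒᵖ, (F.obj d).X | (F.map u).toFun (x d) = x d'} := by
    ext x
    simp only [Set.mem_iInter, Set.mem_setOf_eq]
    rfl
  rw [this]
  refine isClosed_iInter fun d => isClosed_iInter fun d' => isClosed_iInter fun u => ?_
  exact isClosed_eq (continuous_of_discreteTopology.comp (continuous_apply d))
    (continuous_apply d')

theorem plim_compactSpace (hfin : ∀ d : Tᵒᵖ, Finite (F.obj d).X) :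
    CompactSpace (plim F) := by
  haveI : ∀ d : Tᵒᵖ, Finite (F.obj d).X := hfin
  exact isCompact_iff_compactSpace.mp (isClosed_plim F).isCompact

theorem plim_free (hfin : ∀ d : Tᵒᵖ, Finite (F.obj d).X) :
    Module.Free ℤ (LocallyConstant (plim F) ℤ) := by
  haveI := plim_compactSpace F hfin
  exact LocallyConstant.freeOfProfinite (Profinite.of (plim F))

end Aux

section Aux2

variable {T : Type u} [PartialOrder T] [IsDirected T (· ≤ ·)] (F : Tᵒᵖ ⥤ Pointed.{w})

theorem exists_plim_of_ne_zero {A : Type v} [AddCommGroup A]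
    (hfin : ∀ d : Tᵒᵖ, Finite (F.obj d).X) (g : glim F A) (d : Tᵒᵖ)
    {y : (F.obj d).X} (hy : ((g.1 d : (F.obj d).X →₀ A)) y ≠ 0) :
    ∃ z : plim F, z.1 d = y := by
  classical
  have hyp : y ≠ (F.obj d).point := fun hyp => hy (by rw [hyp]; exact (g.1 d).2)
  have he : ∀ (v : T) (h : d.unop ≤ v),
      ∃ x : (F.obj (Opposite.op v)).X, theta F h x = y := by
    intro v h
    have hc := g.2 ((homOfLE h).op)
    have hval : ((Finsupp.mapDomain (theta F h)
        (g.1 (Opposite.op v) : (F.obj (Opposite.op v)).X →₀ A)).erase (F.obj d).point) y ≠ 0 := by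
      have := congrArg Subtype.val hc
      rw [show (smashMap (F.obj (Opposite.op v)).point (F.obj d).point
        ((F.map (homOfLE h).op)).toFun A (g.1 (Opposite.op v)) : (F.obj d).X →₀ A)
        = (Finsupp.mapDomain (theta F h)
          (g.1 (Opposite.op v) : (F.obj (Opposite.op v)).X →₀ A)).erase (F.obj d).point
        from rfl] at this
      rw [this]
      exact hy
    rw [Finsupp.erase_ne hyp] at hval
    have h3 : y ∈ (Finsupp.mapDomain (theta F h)
        (g.1 (Opposite.op v) : (F.obj (Opposite.op v)).X →₀ A)).support :=
      Finsupp.mem_support_iff.2 hval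
    have h4 := Finsupp.mapDomain_support h3
    obtain ⟨x, -, hx⟩ := Finset.mem_image.1 h4
    exact ⟨x, hx⟩
  let J := {v : T // d.unop ≤ v}
  haveI : Nonempty J := ⟨⟨d.unop, le_refl _⟩⟩
  haveI : IsDirected J (· ≤ ·) := ⟨fun a b => by
    obtain ⟨c, hac, hbc⟩ := directed_of (· ≤ ·) a.1 b.1
    exact ⟨⟨c, a.2.trans hac⟩, hac, hbc⟩⟩
  let G : Jᵒᵖ ⥤ Type w :=
    { obj := fun j => {x : (F.obj (Opposite.op j.unop.1)).X // theta F j.unop.2 x = y}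
      map := fun {j j'} u => TypeCat.ofHom fun x =>
        ⟨theta F (Subtype.coe_le_coe.mpr (leOfHom u.unop)) x.1, by
          rw [theta_comp]; exact x.2⟩
      map_id := fun j => by ext x; exact theta_refl F _ x.1
      map_comp := fun {j j' j''} u v => by
        ext x; exact (theta_comp F _ _ x.1).symm }
  haveI : ∀ j : Jᵒᵖ, Finite (G.obj j) := fun j => by
    haveI := hfin (Opposite.op j.unop.1); exact Subtype.finite
  haveI : ∀ j : Jᵒᵖ, Nonempty (G.obj j) := fun j => by
    obtain ⟨x, hx⟩ := he j.unop.1 j.unop.2; exact ⟨⟨x, hx⟩⟩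
  obtain ⟨σ, hσ⟩ := nonempty_sections_of_finite_inverse_system G
  have hub : ∀ s : T, ∃ c : T, s ≤ c ∧ d.unop ≤ c := fun s => by
    obtain ⟨c, h1, h2⟩ := directed_of (· ≤ ·) s d.unop
    exact ⟨c, h1, h2⟩
  let zc : ∀ d' : Tᵒᵖ, (F.obj d').X := fun d' =>
    theta F (hub d'.unop).choose_spec.1
      (σ (Opposite.op ⟨(hub d'.unop).choose, (hub d'.unop).choose_spec.2⟩)).1
  have hmem : zc ∈ plim F := by
    intro d1 d2 u
    have h12 : d2.unop ≤ d1.unop := leOfHom u.unop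
    have hu : u = (homOfLE h12).op := rfl
    obtain ⟨w, hw1, hw2⟩ := directed_of (· ≤ ·)
      (⟨(hub d1.unop).choose, (hub d1.unop).choose_spec.2⟩ : J)
      (⟨(hub d2.unop).choose, (hub d2.unop).choose_spec.2⟩ : J)
    have e1 : (σ (Opposite.op ⟨(hub d1.unop).choose, (hub d1.unop).choose_spec.2⟩)).1
        = theta F (Subtype.coe_le_coe.mpr hw1) (σ (Opposite.op w)).1 :=
      congrArg Subtype.val (hσ ((homOfLE hw1).op)).symm
    have e2 : (σ (Opposite.op ⟨(hub d2.unop).choose, (hub d2.unop).choose_spec.2⟩)).1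
        = theta F (Subtype.coe_le_coe.mpr hw2) (σ (Opposite.op w)).1 :=
      congrArg Subtype.val (hσ ((homOfLE hw2).op)).symm
    show (F.map u).toFun (zc d1) = zc d2
    rw [hu]
    show theta F h12 (theta F (hub d1.unop).choose_spec.1
      (σ (Opposite.op ⟨(hub d1.unop).choose, (hub d1.unop).choose_spec.2⟩)).1)
      = theta F (hub d2.unop).choose_spec.1
      (σ (Opposite.op ⟨(hub d2.unop).choose, (hub d2.unop).choose_spec.2⟩)).1
    rw [e1, e2, theta_comp, theta_comp, theta_comp]
  refine ⟨⟨zc, hmem⟩, ?_⟩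
  show theta F (hub d.unop).choose_spec.1
    (σ (Opposite.op ⟨(hub d.unop).choose, (hub d.unop).choose_spec.2⟩)).1 = y
  exact (σ (Opposite.op ⟨(hub d.unop).choose, (hub d.unop).choose_spec.2⟩)).2

end Aux2

section Aux3

variable {T : Type u} [PartialOrder T] [IsDirected T (· ≤ ·)] [Nonempty T]
  (F : Tᵒᵖ ⥤ Pointed.{w})

theorem exists_factor (hfin : ∀ d : Tᵒᵖ, Finite (F.obj d).X)
    (f : LocallyConstant (plim F) ℤ) :
    ∃ (t : T) (ft : (F.obj (Opposite.op t)).X → ℤ),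
      ∀ z : plim F, f z = ft (z.1 (Opposite.op t)) := by
  classical
  haveI := plim_compactSpace F hfin
  have key : ∀ z : plim F, ∃ I : Finset Tᵒᵖ,
      ∀ z' : plim F, (∀ a ∈ I, z'.1 a = z.1 a) → f z' = f z := by
    intro z
    have hopen : IsOpen (f ⁻¹' {f z} : Set (plim F)) := f.isLocallyConstant _
    rw [isOpen_induced_iff] at hopen
    obtain ⟨V, hV, hVeq⟩ := hopen
    have hz : z.1 ∈ V := by
      have : z ∈ (Subtype.val ⁻¹' V : Set (plim F)) := by
        rw [hVeq]; exact rfl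
      exact this
    obtain ⟨I, U, hU, hsub⟩ := (isOpen_pi_iff.mp hV) z.1 hz
    refine ⟨I, fun z' hz' => ?_⟩
    have h1 : z'.1 ∈ (I : Set Tᵒᵖ).pi U := fun a ha => by
      rw [hz' a ha]; exact (hU a ha).2
    have h2 : z' ∈ (Subtype.val ⁻¹' V : Set (plim F)) := hsub h1
    rw [hVeq] at h2
    exact h2
  choose I hI using key
  have hWopen : ∀ z : plim F, IsOpen {z' : plim F | ∀ a ∈ I z, z'.1 a = z.1 a} := by
    intro z
    have : {z' : plim F | ∀ a ∈ I z, z'.1 a = z.1 a}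
        = ⋂ a ∈ I z, (fun z' : plim F => z'.1 a) ⁻¹' {z.1 a} := by
      ext w; simp [Set.mem_iInter]
    rw [this]
    exact isOpen_biInter_finset fun a _ =>
      (((continuous_apply a).comp continuous_subtype_val).isOpen_preimage _
        (isOpen_discrete _))
  have hcover : (Set.univ : Set (plim F))
      ⊆ ⋃ z : plim F, {z' : plim F | ∀ a ∈ I z, z'.1 a = z.1 a} :=
    fun z _ => Set.mem_iUnion.2 ⟨z, fun a _ => rfl⟩
  obtain ⟨Z, hZ⟩ := isCompact_univ.elim_finite_subcover _ hWopen hcover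
  obtain ⟨t, ht⟩ := Finset.exists_le ((Z.biUnion I).image Opposite.unop)
  have hdet : ∀ z' z'' : plim F,
      z'.1 (Opposite.op t) = z''.1 (Opposite.op t) → f z' = f z'' := by
    intro z' z'' he
    obtain ⟨z, hzZ, hz'in⟩ : ∃ z ∈ Z, z' ∈ {w : plim F | ∀ a ∈ I z, w.1 a = z.1 a} := by
      have := hZ (Set.mem_univ z')
      simpa using this
    have hcoord : ∀ a ∈ I z, z''.1 a = z'.1 a := by
      intro a ha
      have hat : Opposite.unop a ≤ t :=
        ht _ (Finset.mem_image.2 ⟨a, Finset.mem_biUnion.2 ⟨z, hzZ, ha⟩, rfl⟩)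
      have h1 : theta F hat (z'.1 (Opposite.op t)) = z'.1 a := z'.2 ((homOfLE hat).op)
      have h2 : theta F hat (z''.1 (Opposite.op t)) = z''.1 a := z''.2 ((homOfLE hat).op)
      rw [← h1, ← h2, he]
    have hz''in : ∀ a ∈ I z, z''.1 a = z.1 a :=
      fun a ha => (hcoord a ha).trans (hz'in a ha)
    rw [hI z z' hz'in, hI z z'' hz''in]
  refine ⟨t, fun e =>
    if h : ∃ z : plim F, z.1 (Opposite.op t) = e then f h.choose else 0, fun z => ?_⟩
  have hx : ∃ z' : plim F, z'.1 (Opposite.op t) = z.1 (Opposite.op t) := ⟨z, rfl⟩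
  show f z = if h : ∃ z' : plim F, z'.1 (Opposite.op t) = z.1 (Opposite.op t)
    then f h.choose else 0
  rw [dif_pos hx]
  exact hdet z hx.choose hx.choose_spec.symm

end Aux3

section Aux4

variable {Y : Type v} {A : Type*} [AddCommGroup A]

/-- Weighted sum of the values of a finitely supported function. -/
noncomputable def wsum (w : Y → ℤ) : (Y →₀ A) →+ A :=
  Finsupp.liftAddHom fun y => smulAddHom ℤ A (w y)

theorem wsum_single (w : Y → ℤ) (y : Y) (a : A) : wsum w (Finsupp.single y a) = w y • a :=
  Finsupp.liftAddHom_apply_single _ _ _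

theorem wsum_apply (w : Y → ℤ) (f : Y →₀ A) : wsum w f = f.sum fun y a => w y • a :=
  Finsupp.liftAddHom_apply _ _

theorem wsum_congr {w w' : Y → ℤ} {f : Y →₀ A} (h : ∀ y ∈ f.support, w y = w' y) :
    wsum w f = wsum w' f := by
  rw [wsum_apply, wsum_apply]
  exact Finsupp.sum_congr fun y hy => by rw [h y hy]

theorem wsum_mapDomain {Z : Type u} (φ : Z → Y) (w : Y → ℤ) (f : Z →₀ A) :
    wsum w (Finsupp.mapDomain φ f) = wsum (fun x => w (φ x)) f := by
  rw [wsum_apply, wsum_apply]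
  exact Finsupp.sum_mapDomain_index (fun b => smul_zero _) fun b m₁ m₂ => smul_add _ _ _

theorem wsum_erase {w : Y → ℤ} {y0 : Y} (hw : w y0 = 0) (f : Y →₀ A) :
    wsum w (f.erase y0) = wsum w f := by
  conv_rhs => rw [← Finsupp.erase_add_single y0 f]
  rw [map_add, wsum_single, hw, zero_smul, add_zero]

theorem wsum_add_weights (w w' : Y → ℤ) (f : Y →₀ A) :
    wsum (fun y => w y + w' y) f = wsum w f + wsum w' f := by
  classical
  rw [wsum_apply, wsum_apply, wsum_apply, ← Finsupp.sum_add]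
  exact Finsupp.sum_congr fun y _ => add_smul _ _ _

theorem wsum_indicator [DecidableEq Y] (y : Y) (f : Y →₀ A) :
    wsum (fun e => if e = y then (1 : ℤ) else 0) f = f y := by
  rw [wsum_apply]
  rw [show (fun (e : Y) (a : A) => (if e = y then (1 : ℤ) else 0) • a)
    = fun e a => if e = y then a else 0 by funext e a; split <;> simp]
  exact Finsupp.sum_ite_self_eq' f y

end Aux4

section Aux5

variable {T : Type u} [PartialOrder T] [IsDirected T (· ≤ ·)] [Nonempty T]
  (F : Tᵒᵖ ⥤ Pointed.{w}) {A : Type v} [AddCommGroup A]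

/-- The pairing of an element of `glim F A` with a representation of a locally
constant function. -/
noncomputable def pairAt (g : glim F A) (t : T) (ft : (F.obj (Opposite.op t)).X → ℤ) : A :=
  wsum (fun y => ft y - ft (F.obj (Opposite.op t)).point)
    (g.1 (Opposite.op t) : (F.obj (Opposite.op t)).X →₀ A)

theorem pairAt_push (g : glim F A) {s t : T} (h : s ≤ t)
    (ft : (F.obj (Opposite.op s)).X → ℤ) :
    pairAt F g t (fun x => ft (theta F h x)) = pairAt F g s ft := by
  have hc := g.2 ((homOfLE h).op)
  have hval : (g.1 (Opposite.op s) : (F.obj (Opposite.op s)).X →₀ A)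
      = (Finsupp.mapDomain (theta F h)
        (g.1 (Opposite.op t) : (F.obj (Opposite.op t)).X →₀ A)).erase
          (F.obj (Opposite.op s)).point := (congrArg Subtype.val hc).symm
  unfold pairAt
  beta_reduce
  rw [theta_point, hval, wsum_erase (by simp), wsum_mapDomain]

theorem pairAt_congr (hfin : ∀ d : Tᵒᵖ, Finite (F.obj d).X) (g : glim F A) (t : T)
    (ft ft' : (F.obj (Opposite.op t)).X → ℤ)
    (h : ∀ z : plim F, ft (z.1 (Opposite.op t)) = ft' (z.1 (Opposite.op t))) :
    pairAt F g t ft = pairAt F g t ft' := by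
  unfold pairAt
  apply wsum_congr
  intro y hy
  obtain ⟨z, hz⟩ := exists_plim_of_ne_zero F hfin g (Opposite.op t)
    (Finsupp.mem_support_iff.1 hy)
  have h1 : ft y = ft' y := by rw [← hz]; exact h z
  have h2 : ft (F.obj (Opposite.op t)).point = ft' (F.obj (Opposite.op t)).point :=
    h (plimPt F)
  rw [h1, h2]

theorem pairAt_eq (hfin : ∀ d : Tᵒᵖ, Finite (F.obj d).X) (g : glim F A) {t s : T}
    (ft : (F.obj (Opposite.op t)).X → ℤ) (fs : (F.obj (Opposite.op s)).X → ℤ)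
    (hfts : ∀ z : plim F, ft (z.1 (Opposite.op t)) = fs (z.1 (Opposite.op s))) :
    pairAt F g t ft = pairAt F g s fs := by
  obtain ⟨u, htu, hsu⟩ := directed_of (· ≤ ·) t s
  rw [← pairAt_push F g htu ft, ← pairAt_push F g hsu fs]
  apply pairAt_congr F hfin
  intro z
  have e1 : theta F htu (z.1 (Opposite.op u)) = z.1 (Opposite.op t) :=
    z.2 ((homOfLE htu).op)
  have e2 : theta F hsu (z.1 (Opposite.op u)) = z.1 (Opposite.op s) :=
    z.2 ((homOfLE hsu).op)
  rw [e1, e2]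
  exact hfts z

theorem pairAt_add (g : glim F A) (t : T) (ft ft' : (F.obj (Opposite.op t)).X → ℤ) :
    pairAt F g t (fun y => ft y + ft' y) = pairAt F g t ft + pairAt F g t ft' := by
  unfold pairAt
  rw [← wsum_add_weights]
  exact congrArg
    (fun w => wsum w ((g.1 (Opposite.op t) : (F.obj (Opposite.op t)).X →₀ A)))
    (funext fun y => by beta_reduce; ring)

end Aux5

section Aux6

attribute [local instance] Classical.propDecidable

variable {T : Type u} [PartialOrder T] [IsDirected T (· ≤ ·)] [Nonempty T]
  (F : Tᵒᵖ ⥤ Pointed.{w}) {A : Type v} [AddCommGroup A]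

/-- The indicator locally constant function of the set `{z ∈ lim X | z d = y}`. -/
noncomputable def indLC (d : Tᵒᵖ) (y : (F.obj d).X) : LocallyConstant (plim F) ℤ :=
  ⟨fun z => if z.1 d = y then 1 else 0,
    (IsLocallyConstant.of_discrete
      (fun e : (F.obj d).X => if e = y then (1 : ℤ) else 0)).comp_continuous
      ((continuous_apply d).comp continuous_subtype_val)⟩

theorem indLC_apply (d : Tᵒᵖ) (y : (F.obj d).X) (z : plim F) :
    indLC F d y z = if z.1 d = y then 1 else 0 := rfl

theorem indLC_sum (d d' : Tᵒᵖ) (u : d ⟶ d') (y : (F.obj d').X)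
    [Fintype (F.obj d).X] :
    ∑ x : (F.obj d).X, (if (F.map u).toFun x = y then indLC F d x else 0)
      = indLC F d' y := by
  apply LocallyConstant.ext
  intro z
  have hcoe := congrFun (map_sum
    (LocallyConstant.coeFnAddMonoidHom : LocallyConstant (plim F) ℤ →+ (plim F → ℤ))
    (fun x => if (F.map u).toFun x = y then indLC F d x else 0) Finset.univ) z
  rw [show ((LocallyConstant.coeFnAddMonoidHom : LocallyConstant (plim F) ℤ →+ (plim F → ℤ))
      (∑ x : (F.obj d).X, (if (F.map u).toFun x = y then indLC F d x else 0)))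
    = ((∑ x : (F.obj d).X, (if (F.map u).toFun x = y then indLC F d x else 0) :
        LocallyConstant (plim F) ℤ) : plim F → ℤ) from rfl] at hcoe
  rw [show ((∑ x : (F.obj d).X, (if (F.map u).toFun x = y then indLC F d x else 0) :
        LocallyConstant (plim F) ℤ) : plim F → ℤ) z
    = (∑ x : (F.obj d).X, (if (F.map u).toFun x = y then indLC F d x else 0) :
        LocallyConstant (plim F) ℤ) z from rfl] at hcoe
  rw [hcoe, Finset.sum_apply]
  have hterm : ∀ x : (F.obj d).X,
      (LocallyConstant.coeFnAddMonoidHom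
        (if (F.map u).toFun x = y then indLC F d x else 0)) z
      = if z.1 d = x then (if (F.map u).toFun x = y then (1 : ℤ) else 0) else 0 := by
    intro x
    by_cases hx : (F.map u).toFun x = y
    · rw [if_pos hx]
      show indLC F d x z = _
      rw [indLC_apply]
      by_cases hz : z.1 d = x <;> simp [hz, hx]
    · rw [if_neg hx]
      show (0 : LocallyConstant (plim F) ℤ) z = _
      by_cases hz : z.1 d = x <;> simp [hz, hx]
  rw [Finset.sum_congr rfl (fun x _ => hterm x), Finset.sum_ite_eq,
    if_pos (Finset.mem_univ _), indLC_apply]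
  have hzd : (F.map u).toFun (z.1 d) = z.1 d' := z.2 u
  rw [hzd]

end Aux6

section Aux7

attribute [local instance] Classical.propDecidable

variable {T : Type u} [PartialOrder T] [IsDirected T (· ≤ ·)] [Nonempty T]
  (F : Tᵒᵖ ⥤ Pointed.{w}) {A : Type v} [AddCommGroup A]

/-- The family of elements of the smash products obtained from a homomorphism on
locally constant functions via indicator functions. -/
noncomputable def liftFam (hfin : ∀ d : Tᵒᵖ, Finite (F.obj d).X)
    (lam : LocallyConstant (plim F) ℤ →+ A) (d : Tᵒᵖ) :
    Smash (F.obj d).X (F.obj d).point A :=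
  haveI := hfin d
  ⟨Finsupp.equivFunOnFinite.symm
      (fun y => if y = (F.obj d).point then 0 else lam (indLC F d y)), by
    show (Finsupp.equivFunOnFinite.symm
      (fun y => if y = (F.obj d).point then 0 else lam (indLC F d y))) (F.obj d).point = 0
    rw [Finsupp.equivFunOnFinite_symm_apply_apply]
    exact if_pos rfl⟩

theorem liftFam_apply (hfin : ∀ d : Tᵒᵖ, Finite (F.obj d).X)
    (lam : LocallyConstant (plim F) ℤ →+ A) (d : Tᵒᵖ) (y : (F.obj d).X) :
    ((liftFam F hfin lam d : (F.obj d).X →₀ A)) y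
      = if y = (F.obj d).point then 0 else lam (indLC F d y) := by
  haveI := hfin d
  show (Finsupp.equivFunOnFinite.symm
    (fun y => if y = (F.obj d).point then 0 else lam (indLC F d y))) y = _
  rw [Finsupp.equivFunOnFinite_symm_apply_apply]

theorem liftFam_mem (hfin : ∀ d : Tᵒᵖ, Finite (F.obj d).X)
    (lam : LocallyConstant (plim F) ℤ →+ A) :
    (fun d => liftFam F hfin lam d) ∈ glim F A := by
  intro d d' u
  apply Subtype.ext
  apply Finsupp.ext
  intro y
  haveI := hfin d
  haveI : Fintype (F.obj d).X := Fintype.ofFinite _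
  show ((Finsupp.mapDomain (F.map u).toFun
      (liftFam F hfin lam d : (F.obj d).X →₀ A)).erase (F.obj d').point) y
    = (liftFam F hfin lam d' : (F.obj d').X →₀ A) y
  by_cases hy : y = (F.obj d').point
  · rw [hy, Finsupp.erase_same, liftFam_apply, if_pos rfl]
  · rw [Finsupp.erase_ne hy, liftFam_apply, if_neg hy]
    rw [Finsupp.mapDomain, Finsupp.sum_apply]
    rw [show ((liftFam F hfin lam d : (F.obj d).X →₀ A).sum
        (fun x a => (Finsupp.single ((F.map u).toFun x) a) y))
      = ((liftFam F hfin lam d : (F.obj d).X →₀ A).sum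
        (fun x a => if (F.map u).toFun x = y then a else 0))
      from Finsupp.sum_congr fun x _ => Finsupp.single_apply]
    rw [Finsupp.sum_fintype _ _ (fun x => by simp)]
    rw [← indLC_sum F d d' u y, map_sum lam
      (fun x => if (F.map u).toFun x = y then indLC F d x else 0) Finset.univ]
    refine Finset.sum_congr rfl fun x _ => ?_
    by_cases hx : (F.map u).toFun x = y
    · rw [if_pos hx, if_pos hx, liftFam_apply]
      have hxpt : x ≠ (F.obj d).point := fun h => hy (by
        rw [← hx, h, (F.map u).map_point])
      rw [if_neg hxpt]
    · rw [if_neg hx, if_neg hx, map_zero]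

theorem glim_div_s11 (hfin : ∀ d : Tᵒᵖ, Finite (F.obj d).X) (n : ℕ)
    (hA : ∀ a : A, ∃ b : A, n • b = a) (g : glim F A) :
    ∃ g' : glim F A, n • g' = g := by
  classical
  haveI := plim_compactSpace F hfin
  haveI : Module.Free ℤ (LocallyConstant (plim F) ℤ) := plim_free F hfin
  let P : LocallyConstant (plim F) ℤ → A := fun f =>
    pairAt F g (exists_factor F hfin f).choose (exists_factor F hfin f).choose_spec.choose
  have hP : ∀ (f : LocallyConstant (plim F) ℤ) (t : T)
      (ft : (F.obj (Opposite.op t)).X → ℤ),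
      (∀ z : plim F, f z = ft (z.1 (Opposite.op t))) → P f = pairAt F g t ft := by
    intro f t ft hft
    exact pairAt_eq F hfin g _ _ (fun z => by
      rw [← (exists_factor F hfin f).choose_spec.choose_spec z, hft z])
  have hPadd : ∀ f1 f2, P (f1 + f2) = P f1 + P f2 := by
    intro f1 f2
    obtain ⟨t1, ft1, h1⟩ := exists_factor F hfin f1
    obtain ⟨t2, ft2, h2⟩ := exists_factor F hfin f2
    obtain ⟨u, hu1, hu2⟩ := directed_of (· ≤ ·) t1 t2
    have h1u : ∀ z : plim F, f1 z = ft1 (theta F hu1 (z.1 (Opposite.op u))) := fun z => by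
      rw [show theta F hu1 (z.1 (Opposite.op u)) = z.1 (Opposite.op t1)
        from z.2 ((homOfLE hu1).op)]
      exact h1 z
    have h2u : ∀ z : plim F, f2 z = ft2 (theta F hu2 (z.1 (Opposite.op u))) := fun z => by
      rw [show theta F hu2 (z.1 (Opposite.op u)) = z.1 (Opposite.op t2)
        from z.2 ((homOfLE hu2).op)]
      exact h2 z
    have hsum : ∀ z : plim F, (f1 + f2) z
        = ft1 (theta F hu1 (z.1 (Opposite.op u))) + ft2 (theta F hu2 (z.1 (Opposite.op u))) := by
      intro z
      have : (f1 + f2) z = f1 z + f2 z := rfl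
      rw [this, h1u z, h2u z]
    rw [hP (f1 + f2) u (fun e => ft1 (theta F hu1 e) + ft2 (theta F hu2 e)) hsum,
      hP f1 u (fun e => ft1 (theta F hu1 e)) h1u,
      hP f2 u (fun e => ft2 (theta F hu2 e)) h2u]
    exact pairAt_add F g u _ _
  let Phom : LocallyConstant (plim F) ℤ →+ A := AddMonoidHom.mk' P hPadd
  let B := Module.Free.chooseBasis ℤ (LocallyConstant (plim F) ℤ)
  let lam : LocallyConstant (plim F) ℤ →ₗ[ℤ] A :=
    B.constr ℤ (fun i => (hA (Phom (B i))).choose)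
  have hkey : ∀ f, n • lam f = Phom f := by
    have hlin : ((n : ℤ) • lam) = Phom.toIntLinearMap := by
      apply Module.Basis.ext B
      intro i
      show (n : ℤ) • lam (B i) = Phom (B i)
      rw [show lam (B i) = (hA (Phom (B i))).choose from B.constr_basis ℤ _ i]
      rw [natCast_zsmul]
      exact (hA (Phom (B i))).choose_spec
    intro f
    have := congrArg (fun (L : LocallyConstant (plim F) ℤ →ₗ[ℤ] A) => L f) hlin
    simpa [natCast_zsmul] using this
  refine ⟨⟨fun d => liftFam F hfin lam.toAddMonoidHom d, liftFam_mem F hfin _⟩, ?_⟩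
  apply Subtype.ext
  funext d
  apply Subtype.ext
  apply Finsupp.ext
  intro y
  have hcoe : ((n • (⟨fun d => liftFam F hfin lam.toAddMonoidHom d,
      liftFam_mem F hfin _⟩ : glim F A)).1 d : (F.obj d).X →₀ A) y
      = n • ((liftFam F hfin lam.toAddMonoidHom d : (F.obj d).X →₀ A) y) := rfl
  rw [hcoe, liftFam_apply]
  by_cases hy : y = (F.obj d).point
  · rw [if_pos hy, smul_zero, hy]
    exact ((g.1 d).2).symm
  · rw [if_neg hy]
    show n • lam (indLC F d y) = _
    rw [hkey (indLC F d y)]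
    rw [show Phom (indLC F d y) = pairAt F g d.unop
        (fun e => if e = y then (1 : ℤ) else 0) from
      hP _ d.unop _ (fun z => rfl)]
    unfold pairAt
    beta_reduce
    rw [wsum_congr (w' := fun e => if e = y then (1 : ℤ) else 0)
      (fun e _ => by
        rw [if_neg (show ¬((F.obj (Opposite.op d.unop)).point = y)
          from fun h => hy h.symm), sub_zero]),
      wsum_indicator]

end Aux7

/-- Let `A` be an abelian group, `T` a directed poset and `F : Tᵒᵖ ⥤ Set_*` a diagram
of *finite* pointed sets.  If `A` is `p`-divisible for a prime `p`, then
`G(X,A) = lim_T(X∧A)` and the cokernel `H(X,A)` of the natural map `ρ` are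
`p`-divisible.  Consequently, if `A` is divisible then `G(X,A)` and `H(X,A)` are
divisible. -/
theorem stmt11 {T : Type u} [PartialOrder T] [IsDirected T (· ≤ ·)] [Nonempty T]
    (F : Tᵒᵖ ⥤ Pointed.{w}) (hfin : ∀ d : Tᵒᵖ, Finite (F.obj d).X)
    (A : Type*) [AddCommGroup A] :
    (∀ p : ℕ, p.Prime → (∀ a : A, ∃ b : A, p • b = a) →
      ((∀ g : glim F A, ∃ g' : glim F A, p • g' = g) ∧
        (∀ x : ↥(glim F A) ⧸ (rho F A).range, ∃ y, p • y = x))) ∧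
    ((∀ n : ℕ, 1 ≤ n → ∀ a : A, ∃ b : A, n • b = a) →
      ((∀ n : ℕ, 1 ≤ n → ∀ g : glim F A, ∃ g' : glim F A, n • g' = g) ∧
        (∀ n : ℕ, 1 ≤ n → ∀ x : ↥(glim F A) ⧸ (rho F A).range, ∃ y, n • y = x))) := by
  have main : ∀ n : ℕ, (∀ a : A, ∃ b : A, n • b = a) →
      ∀ g : glim F A, ∃ g' : glim F A, n • g' = g :=
    fun n hA g => glim_div_s11 F hfin n hA g
  have quot : ∀ n : ℕ, (∀ a : A, ∃ b : A, n • b = a) →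
      ∀ x : ↥(glim F A) ⧸ (rho F A).range, ∃ y, n • y = x := by
    intro n hA x
    refine QuotientAddGroup.induction_on x (fun g => ?_)
    obtain ⟨g', hg'⟩ := main n hA g
    refine ⟨QuotientAddGroup.mk g', ?_⟩
    rw [← hg']
    exact ((QuotientAddGroup.mk' _).map_nsmul n g').symm
  exact ⟨fun p _ hA => ⟨main p hA, quot p hA⟩,
    fun hA => ⟨fun n hn => main n (hA n hn), fun n hn => quot n (hA n hn)⟩⟩
end

section
/- Let A be an abelian group, 𝒯 a directed poset and X : 𝒯 → Set_* a diagram of pointed sets such that X(t) is finite for every t ∈ 𝒯. If A is cotorsion, then G(X,A) = lim_𝒯(X∧A) and the cokernel H(X,A) of the natural map ρ are cotorsion. -/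
open CategoryTheory Finsupp

universe u v w

/-- `C` is cotorsion, i.e. `Ext¹_ℤ(ℚ, C) = 0`.  Applying `Hom(-, C)` to the standard
free presentation `0 → ⊕_{n ∈ ℕ} ℤ → ⊕_{n ∈ ℕ} ℤ → ℚ → 0` (where the first map sends
`e_n ↦ e_n - (n+1)·e_{n+1}`) identifies `Ext¹_ℤ(ℚ, C)` with the cokernel of
`C^ℕ → C^ℕ, (x_n) ↦ (x_n - (n+1)x_{n+1})`; hence `Ext¹_ℤ(ℚ, C) = 0` iff every system
of equations `x_n - (n+1)·x_{n+1} = a_n` (`n ∈ ℕ`) is solvable in `C`. -/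
def Cotorsion (C : Type*) [AddCommGroup C] : Prop :=
  ∀ a : ℕ → C, ∃ x : ℕ → C, ∀ n : ℕ, x n - (n + 1) • x (n + 1) = a n
section DmapSection
variable {C : Type*} [AddCommGroup C]

/-- The map `x ↦ (xₙ - (n+1)xₙ₊₁)` on `C^ℕ`. -/
def Dmap (C : Type*) [AddCommGroup C] : (ℕ → C) →+ (ℕ → C) where
  toFun x := fun n => x n - (n + 1) • x (n + 1)
  map_zero' := by funext n; simp
  map_add' x y := by funext n; simp only [Pi.add_apply, smul_add]; abel

theorem cotorsion_iff_surj : Cotorsion C ↔ Function.Surjective (Dmap C) := by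
  constructor
  · intro h a; obtain ⟨x, hx⟩ := h a; exact ⟨x, funext hx⟩
  · intro h a; obtain ⟨x, hx⟩ := h a; exact ⟨x, fun n => congrFun hx n⟩

theorem dmap_step {y : ℕ → C} (hy : Dmap C y = 0) (n : ℕ) : y n = (n + 1) • y (n + 1) := by
  have h := congrFun hy n
  simp only [Dmap, AddMonoidHom.coe_mk, ZeroHom.coe_mk, Pi.zero_apply] at h
  exact sub_eq_zero.mp h

theorem dmap_ker_smul {y : ℕ → C} (hy : Dmap C y = 0) (n k : ℕ) :
    y n = (∏ i ∈ Finset.range k, (n + 1 + i)) • y (n + k) := by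
  induction k with
  | zero => simp
  | succ k ih =>
    have h1 : n + 1 + k = n + k + 1 := by omega
    have h2 : n + (k + 1) = n + k + 1 := by omega
    rw [ih, dmap_step hy (n + k), smul_smul, Finset.prod_range_succ, h1, h2]

theorem dmap_ker_divisible {y : ℕ → C} (hy : Dmap C y = 0) (m : ℕ) (hm : m ≠ 0) :
    ∃ z : ℕ → C, Dmap C z = 0 ∧ m • z = y := by
  have hmpos : 0 < m := Nat.pos_of_ne_zero hm
  set P : ℕ → ℕ := fun n => ∏ i ∈ Finset.range m, (n + 1 + i) with hP
  have hdvd : ∀ n, m ∣ P n := by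
    intro n
    obtain ⟨r, h2, h4, hdr⟩ : ∃ r, r < m ∧ r ≤ n ∧ m ∣ n - r :=
      ⟨n % m, Nat.mod_lt _ hmpos, Nat.mod_le n m, Nat.dvd_sub_mod n⟩
    have h1 : m - 1 - r ∈ Finset.range m := Finset.mem_range.mpr (by omega)
    refine dvd_trans ?_ (Finset.dvd_prod_of_mem _ h1)
    have h3 : n + 1 + (m - 1 - r) = (n - r) + m := by omega
    rw [h3]
    exact dvd_add hdr dvd_rfl
  set c : ℕ → ℕ := fun n => P n / m with hc
  have hmc : ∀ n, m * c n = P n := fun n => Nat.mul_div_cancel' (hdvd n)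
  have hkey : ∀ n, c n * (n + m + 1) = (n + 1) * c (n + 1) := by
    intro n
    apply Nat.eq_of_mul_eq_mul_left hmpos
    have e1 : m * (c n * (n + m + 1)) = P n * (n + m + 1) := by rw [← mul_assoc, hmc]
    have e2 : m * ((n + 1) * c (n + 1)) = (n + 1) * P (n + 1) := by
      rw [mul_comm m, mul_assoc, mul_comm (c (n + 1)) m, hmc]
    rw [e1, e2]
    have e3 : P n * (n + m + 1) = ∏ i ∈ Finset.range (m + 1), (n + 1 + i) := by
      have h6 : n + 1 + m = n + m + 1 := by omega
      rw [Finset.prod_range_succ, h6]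
    have e4 : (n + 1) * P (n + 1) = ∏ i ∈ Finset.range (m + 1), (n + 1 + i) := by
      rw [Finset.prod_range_succ', mul_comm]
      congr 1
      all_goals first
        | omega
        | exact Finset.prod_congr rfl fun i _ => by omega
    rw [e3, e4]
  refine ⟨fun n => c n • y (n + m), ?_, ?_⟩
  · funext n
    have h5 : n + 1 + m = n + m + 1 := by omega
    have : c n • y (n + m) - (n + 1) • (c (n + 1) • y (n + 1 + m)) = 0 := by
      rw [h5, dmap_step hy (n + m), smul_smul, smul_smul, hkey]
      exact sub_self _
    exact this
  · funext n
    show m • c n • y (n + m) = y n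
    rw [smul_smul, hmc, ← dmap_ker_smul hy]

/-- If `C` is cotorsion, `Dmap C` has an additive section. -/
theorem exists_dmap_section (hC : Cotorsion C) :
    ∃ s : (ℕ → C) →+ (ℕ → C), ∀ a, Dmap C (s a) = a := by
  have hsurj : Function.Surjective (Dmap C) := cotorsion_iff_surj.mp hC
  set K : AddSubgroup (ℕ → C) := (Dmap C).ker with hK
  haveI : DivisibleBy ↥K ℕ := by
    refine divisibleByOfSMulRightSurj _ _ ?_
    intro m hm z
    obtain ⟨w, hw1, hw2⟩ := dmap_ker_divisible (AddMonoidHom.mem_ker.mp z.2) m hm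
    exact ⟨⟨w, AddMonoidHom.mem_ker.mpr hw1⟩, Subtype.ext hw2⟩
  haveI : DivisibleBy ↥K ℤ := AddGroup.divisibleByIntOfDivisibleByNat _
  haveI : Injective (AddCommGrpCat.of ↥K) := AddCommGrpCat.injective_of_divisible _
  let ι : AddCommGrpCat.of ↥K ⟶ AddCommGrpCat.of (ℕ → C) := AddCommGrpCat.ofHom K.subtype
  haveI : Mono ι := (AddCommGrpCat.mono_iff_injective ι).mpr Subtype.val_injective
  let r : AddCommGrpCat.of (ℕ → C) ⟶ AddCommGrpCat.of ↥K := Injective.factorThru (𝟙 _) ι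
  let rm : (ℕ → C) →+ ↥K := r.hom
  have hr : ∀ k : ↥K, rm (k : ℕ → C) = k := by
    intro k
    have h := Injective.comp_factorThru (𝟙 (AddCommGrpCat.of ↥K)) ι
    calc rm (k : ℕ → C) = (ι ≫ r) k := rfl
    _ = (𝟙 (AddCommGrpCat.of ↥K)) k := by rw [h]
    _ = k := rfl
  let E' : AddSubgroup (ℕ → C) := rm.ker
  let D' : ↥E' →+ (ℕ → C) := (Dmap C).comp E'.subtype
  have hbij : Function.Bijective D' := by
    constructor
    · intro e₁ e₂ h
      have h1 : (e₁ : ℕ → C) - (e₂ : ℕ → C) ∈ K := AddMonoidHom.mem_ker.mpr (by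
        rw [map_sub, sub_eq_zero]; exact h)
      have h2 : rm ((e₁ : ℕ → C) - (e₂ : ℕ → C)) = 0 := by
        have he1 : rm (e₁ : ℕ → C) = 0 := e₁.2
        have he2 : rm (e₂ : ℕ → C) = 0 := e₂.2
        rw [map_sub, he1, he2, sub_self]
      have := hr ⟨_, h1⟩
      rw [h2] at this
      exact Subtype.ext (by rw [← sub_eq_zero]; exact congrArg Subtype.val this.symm)
    · intro b
      obtain ⟨p, hp⟩ := hsurj b
      refine ⟨⟨p - ((rm p : ↥K) : ℕ → C), ?_⟩, ?_⟩
      · show rm (p - ((rm p : ↥K) : ℕ → C)) = 0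
        rw [map_sub, hr (rm p), sub_self]
      · show Dmap C (p - ((rm p : ↥K) : ℕ → C)) = b
        rw [map_sub, hp, (AddMonoidHom.mem_ker.mp (rm p).2 : Dmap C (((rm p : ↥K)) : ℕ → C) = 0),
          sub_zero]
  let e := AddEquiv.ofBijective D' hbij
  refine ⟨E'.subtype.comp e.symm.toAddMonoidHom, fun a => ?_⟩
  show Dmap C ((e.symm a : ↥E') : ℕ → C) = a
  exact e.apply_symm_apply a

end DmapSection

theorem cotorsion_of_surjective {C₁ : Type*} {C₂ : Type*} [AddCommGroup C₁] [AddCommGroup C₂]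
    (f : C₁ →+ C₂) (hf : Function.Surjective f) (h : Cotorsion C₁) : Cotorsion C₂ := by
  intro a
  choose b hb using fun n => hf (a n)
  obtain ⟨x, hx⟩ := h b
  refine ⟨fun n => f (x n), fun n => ?_⟩
  rw [← map_nsmul, ← map_sub, hx, hb]

theorem smashMap_coe_apply {Y : Type u} {Z : Type v} (y0 : Y) (z0 : Z) (g : Y → Z)
    (A : Type w) [AddCommGroup A] [Fintype Y] [DecidableEq Z] (f : Smash Y y0 A)
    {z : Z} (hz : z ≠ z0) :
    ((smashMap y0 z0 g A f : Smash Z z0 A) : Z →₀ A) z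
      = ∑ y : Y, if g y = z then ((f : Y →₀ A) y) else 0 := by
  calc ((Finsupp.mapDomain g (f : Y →₀ A)).erase z0) z
      = (Finsupp.mapDomain g (f : Y →₀ A)) z := Finsupp.erase_ne hz
    _ = ∑ y ∈ (f : Y →₀ A).support, (Finsupp.single (g y) ((f : Y →₀ A) y)) z := by
        rw [Finsupp.mapDomain, Finsupp.sum_apply, Finsupp.sum]
    _ = ∑ y : Y, (Finsupp.single (g y) ((f : Y →₀ A) y)) z :=
        Finset.sum_subset (Finset.subset_univ _) (fun y _ hy => by
          rw [Finsupp.notMem_support_iff.mp hy, Finsupp.single_zero, Finsupp.coe_zero,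
            Pi.zero_apply])
    _ = ∑ y : Y, if g y = z then ((f : Y →₀ A) y) else 0 :=
        Finset.sum_congr rfl fun y _ => Finsupp.single_apply

/-- Let `A` be an abelian group, `T` a directed poset and `F : Tᵒᵖ ⥤ Set_*` a diagram
of *finite* pointed sets.  If `A` is cotorsion, then `G(X,A) = lim_T(X∧A)` and the
cokernel `H(X,A)` of the natural map `ρ` are cotorsion. -/
theorem stmt12 {T : Type u} [PartialOrder T] [IsDirected T (· ≤ ·)] [Nonempty T]
    (F : Tᵒᵖ ⥤ Pointed.{w}) (hfin : ∀ d : Tᵒᵖ, Finite (F.obj d).X)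
    (A : Type*) [AddCommGroup A] (hA : Cotorsion A) :
    Cotorsion (glim F A) ∧ Cotorsion (↥(glim F A) ⧸ (rho F A).range) := by
  classical
  letI : ∀ d : Tᵒᵖ, Fintype (F.obj d).X := fun d => @Fintype.ofFinite _ (hfin d)
  obtain ⟨s, hs⟩ := exists_dmap_section hA
  have h1 : Cotorsion ↥(glim F A) := by
    intro a
    set strand : ∀ d : Tᵒᵖ, (F.obj d).X → (ℕ → A) :=
      fun d y => fun n => ((a n).1 d).1 y with hstrand
    set t : ∀ d : Tᵒᵖ, (F.obj d).X → (ℕ → A) := fun d y => s (strand d y) with ht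
    have hpt : ∀ (d : Tᵒᵖ) (n : ℕ), t d (F.obj d).point n = 0 := by
      intro d n
      have h0 : strand d (F.obj d).point = 0 := funext fun k => ((a k).1 d).2
      show s (strand d (F.obj d).point) n = 0
      rw [h0, map_zero]
      rfl
    set xf : ℕ → ∀ d : Tᵒᵖ, ↥(Smash (F.obj d).X (F.obj d).point A) := fun n d =>
      ⟨Finsupp.equivFunOnFinite.symm (fun y => t d y n), mem_smash.mpr (by
        rw [Finsupp.coe_equivFunOnFinite_symm]
        exact hpt d n)⟩ with hxf
    have hstr : ∀ {d d' : Tᵒᵖ} (u : d ⟶ d') {z : (F.obj d').X}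
        (hz : z ≠ (F.obj d').point),
        strand d' z = ∑ y : (F.obj d).X,
          if (F.map u).toFun y = z then strand d y else 0 := by
      intro d d' u z hz
      funext k
      have h2 : ((a k).1 d').1 z = ∑ y : (F.obj d).X,
          if (F.map u).toFun y = z then ((a k).1 d).1 y else 0 := by
        rw [← (a k).2 u]
        exact smashMap_coe_apply _ _ _ _ _ hz
      calc strand d' z k = ((a k).1 d').1 z := rfl
        _ = ∑ y : (F.obj d).X, if (F.map u).toFun y = z then ((a k).1 d).1 y else 0 := h2
        _ = (∑ y : (F.obj d).X, if (F.map u).toFun y = z then strand d y else 0) k := by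
            rw [Finset.sum_apply]
            exact Finset.sum_congr rfl fun y _ => by split <;> rfl
    have hmem : ∀ n, xf n ∈ glim F A := by
      intro n d d' u
      apply Subtype.ext
      apply Finsupp.ext
      intro z
      by_cases hz : z = (F.obj d').point
      · subst hz
        calc ((smashMap (F.obj d).point (F.obj d').point (F.map u).toFun A (xf n d))
              : (F.obj d').X →₀ A) (F.obj d').point = 0 := Finsupp.erase_same
          _ = ((xf n d') : (F.obj d').X →₀ A) (F.obj d').point := by
              rw [show ((xf n d') : (F.obj d').X →₀ A) (F.obj d').point
                  = t d' (F.obj d').point n from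
                rfl, hpt d' n]
      · rw [smashMap_coe_apply _ _ _ _ _ hz]
        have hr : ((xf n d') : (F.obj d').X →₀ A) z = s (strand d' z) n :=
          rfl
        rw [hr, hstr u hz, map_sum, Finset.sum_apply]
        refine Finset.sum_congr rfl fun y _ => ?_
        have hl : ((xf n d) : (F.obj d).X →₀ A) y = s (strand d y) n :=
          rfl
        rw [hl]
        split
        · rfl
        · rw [map_zero]; rfl
    refine ⟨fun n => ⟨xf n, hmem n⟩, fun n => ?_⟩
    apply Subtype.ext
    funext d
    apply Subtype.ext
    apply Finsupp.ext
    intro y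
    let ev : ↥(glim F A) →+ A :=
      ((Finsupp.applyAddHom y).comp ((Smash (F.obj d).X (F.obj d).point A).subtype)).comp
        (((Pi.evalAddMonoidHom (fun d => ↥(Smash (F.obj d).X (F.obj d).point A)) d).comp
          ((glim F A).subtype)))
    show ev ((⟨xf n, hmem n⟩ : ↥(glim F A)) - (n + 1) • ⟨xf (n + 1), hmem (n + 1)⟩) = ev (a n)
    rw [map_sub, map_nsmul]
    have e1 : ev ⟨xf n, hmem n⟩ = s (strand d y) n :=
      rfl
    have e2 : ev ⟨xf (n + 1), hmem (n + 1)⟩ = s (strand d y) (n + 1) :=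
      rfl
    have e3 : ev (a n) = strand d y n := rfl
    rw [e1, e2, e3]
    conv_rhs => rw [← hs (strand d y)]
    rfl
  exact ⟨h1, cotorsion_of_surjective (QuotientAddGroup.mk' _)
    (QuotientAddGroup.mk'_surjective _) h1⟩
end
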